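/- arXiv:0709.3316 — 5 statements merged into one kernel-verified Lean document; each statement's English description precedes it below -/
import Mathlib

section
/- For every positive integer m and every integer k ≥ 1, the polynomial identity ∑_{n=0}^{k} C(k,n) * y^{n(m+1)} = (1+y^{m+1})^k holds; consequently, differentiating k-1 times and evaluating at y = -1 (where m is even) gives ∑_{n=0}^{k} (-1)^n C(k,n) C(n(m+1), k-1) = 0. -/
open Polynomial Finset fwdDiff

lemma fwdDiff_eval (p : ℝ[X]) :
    fwdDiff (1:ℝ) (fun x ↦ p.eval x) = fun x ↦ (p.comp (X + C 1) - p).eval x := by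
  funext x
  simp [fwdDiff, eval_comp]

lemma fwdDiff_iter_eval_zero (n : ℕ) (p : ℝ[X]) (h : p.degree < n) :
    (fwdDiff (1:ℝ))^[n] (fun x ↦ p.eval x) = 0 := by
  induction n generalizing p with
  | zero =>
    have hp0 : p = 0 := by
      rw [← Polynomial.degree_eq_bot]
      simpa using h
    subst hp0
    funext x; simp
  | succ n ih =>
    rw [Function.iterate_succ_apply, fwdDiff_eval]
    by_cases hp : p.degree ≤ 0
    · have h0 : p.comp (X + C 1) - p = 0 := by
        rw [Polynomial.eq_C_of_degree_le_zero hp]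
        simp
      rw [h0]
      apply ih
      rw [Polynomial.degree_zero]
      exact WithBot.bot_lt_coe n
    · apply ih
      have hp0 : p ≠ 0 := fun h0 => hp (by simp [h0])
      have h1 : (X + C (1:ℝ)).natDegree = 1 := natDegree_X_add_C 1
      have hc0 : p.comp (X + C 1) ≠ 0 := fun hc => by
        have h2 := natDegree_comp (p := p) (q := X + C (1:ℝ))
        rw [hc, h1, mul_one, natDegree_zero] at h2
        have : p.degree ≤ 0 := by
          rw [degree_eq_natDegree hp0, ← h2]
          exact le_refl _
        exact hp this
      have hd : (p.comp (X + C 1)).degree = p.degree := by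
        rw [degree_eq_natDegree hc0, degree_eq_natDegree hp0, natDegree_comp, h1, mul_one]
      have hlc : (p.comp (X + C 1)).leadingCoeff = p.leadingCoeff := by
        rw [leadingCoeff_comp (by rw [h1]; exact one_ne_zero)]
        have : (X + C (1:ℝ)).leadingCoeff = 1 := by
          rw [leadingCoeff_X_add_C]
        rw [this, one_pow, mul_one]
      have hlt := Polynomial.degree_sub_lt hd hc0 hlc
      rw [hd] at hlt
      have hle : p.degree ≤ (n : WithBot ℕ) := by
        rw [degree_eq_natDegree hp0] at h ⊢
        exact_mod_cast Nat.lt_succ_iff.mp (by exact_mod_cast h)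
      exact lt_of_lt_of_le hlt hle

theorem binomial_poly_identity_and_consequence (m k : ℕ) (hm : 0 < m) (hk : 1 ≤ k) :
    (∀ y : ℝ, ∑ n ∈ Finset.range (k + 1), (k.choose n : ℝ) * y ^ (n * (m + 1))
        = (1 + y ^ (m + 1)) ^ k) ∧
    (Even m → ∑ n ∈ Finset.range (k + 1),
        (-1 : ℝ) ^ n * (k.choose n : ℝ) * ((n * (m + 1)).choose (k - 1) : ℝ) = 0) := by
  constructor
  · intro y
    rw [show (1 + y^(m+1)) = (y^(m+1) + 1) from add_comm _ _, add_pow]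
    apply Finset.sum_congr rfl
    intro n _
    rw [one_pow, mul_one, mul_comm n (m+1), pow_mul, mul_comm]
  · intro _
    set p : ℝ[X] := C (((k-1).factorial : ℝ))⁻¹ * (descPochhammer ℝ (k-1)).comp (C ((m:ℝ)+1) * X) with hp
    have hm1 : ((m:ℝ)+1) ≠ 0 := by positivity
    have hndeg : p.natDegree ≤ k - 1 := by
      calc p.natDegree ≤ (C (((k-1).factorial : ℝ))⁻¹).natDegree
            + ((descPochhammer ℝ (k-1)).comp (C ((m:ℝ)+1) * X)).natDegree :=
          natDegree_mul_le
        _ = (k-1) := by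
            rw [natDegree_C, natDegree_comp, descPochhammer_natDegree, zero_add]
            rw [natDegree_C_mul hm1, natDegree_X, mul_one]
    have hpdeg : p.degree < (k : ℕ) := by
      calc p.degree ≤ (p.natDegree : WithBot ℕ) := degree_le_natDegree
        _ < (k : WithBot ℕ) := by exact_mod_cast lt_of_le_of_lt hndeg (by omega)
    have heval : ∀ n : ℕ, p.eval (n:ℝ) = ((n * (m+1)).choose (k-1) : ℝ) := by
      intro n
      have hc : ((m:ℝ)+1) * n = ((n * (m+1) : ℕ) : ℝ) := by push_cast; ring
      rw [hp]
      simp only [eval_mul, eval_C, eval_comp, eval_mul, eval_C, eval_X]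
      rw [hc, descPochhammer_eval_eq_descFactorial,
        Nat.descFactorial_eq_factorial_mul_choose]
      have : ((k-1).factorial : ℝ) ≠ 0 := by positivity
      push_cast
      field_simp
    have hzero : (fwdDiff (1:ℝ))^[k] (fun x ↦ p.eval x) = 0 :=
      fwdDiff_iter_eval_zero k p hpdeg
    have hsum := fwdDiff_iter_eq_sum_shift (1:ℝ) (fun x ↦ p.eval x) k 0
    rw [hzero, Pi.zero_apply] at hsum
    have hrw : ∑ n ∈ Finset.range (k + 1),
        (-1 : ℝ) ^ n * (k.choose n : ℝ) * ((n * (m + 1)).choose (k - 1) : ℝ)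
        = (-1:ℝ)^k * ∑ n ∈ Finset.range (k+1),
            (((-1 : ℤ) ^ (k - n) * (k.choose n) : ℤ) • (fun x : ℝ ↦ p.eval x) ((0:ℝ) + n • (1:ℝ))) := by
      rw [Finset.mul_sum]
      apply Finset.sum_congr rfl
      intro n hn
      have hn' : n ≤ k := Finset.mem_range_succ_iff.mp hn
      have key : ((-1:ℝ))^(k+(k-n)) = (-1:ℝ)^n := by
        rw [show k + (k-n) = n + 2*(k-n) by omega, pow_add, pow_mul]
        simp
      simp only [zsmul_eq_mul, zero_add, nsmul_eq_mul, mul_one]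
      rw [heval n]
      push_cast
      rw [← key]
      ring
    rw [hrw, ← hsum, mul_zero]
end

section
/- Let p be a positive integer, M(p,n) = C(pn+n+1, n)/(pn+n+1), and H_p(x) = ∑_{n≥0} M(p,n)x^n. For every x with 0 ≤ x ≤ p^p/(p+1)^{p+1}, the value y = H_p(x) satisfies x y^{p+1} = y - 1, and H_p(x) is the smallest positive root of this equation. -/
/-- Raney numbers `R_{b,a}(n)` as reals. -/
noncomputable def Rn (b a n : ℕ) : ℝ :=
  if n = 0 then 1 else (a : ℝ) / ((b * n + a : ℕ) : ℝ) * ((b * n + a).choose n : ℝ)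

lemma Rn_zero (b a : ℕ) : Rn b a 0 = 1 := by simp [Rn]

lemma Rn_nonneg (b a n : ℕ) : 0 ≤ Rn b a n := by
  unfold Rn; split
  · norm_num
  · positivity

lemma Rn_of_zero (b n : ℕ) (hn : n ≠ 0) : Rn b 0 n = 0 := by
  simp [Rn, hn]

lemma Rn_rec (b a n : ℕ) (hb : 1 ≤ b) :
    Rn b (a + 1) (n + 1) = Rn b a (n + 1) + Rn b (a + b) n := by
  rcases Nat.eq_zero_or_pos n with rfl | hn
  · have hb0 : (b : ℝ) + a ≠ 0 := by positivity
    have hab : a + b ≠ 0 := by omega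
    simp only [Rn, Nat.succ_ne_zero, if_neg, Nat.one_ne_zero, if_false, if_pos rfl,
      Nat.mul_one, Nat.choose_one_right]
    push_cast
    field_simp
    simp only [Nat.mul_one, Nat.choose_one_right]
    push_cast
    ring
  · have hn' : n ≠ 0 := hn.ne'
    set N : ℕ := b * n + a + b with hN
    have h1 : b * (n + 1) + (a + 1) = N + 1 := by rw [Nat.mul_succ]; omega
    have h2 : b * (n + 1) + a = N := by rw [Nat.mul_succ]; omega
    have h3 : b * n + (a + b) = N := by omega
    have hnN : n + 1 ≤ N := by have := Nat.le_mul_of_pos_left n hb; omega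
    simp only [Rn, Nat.succ_ne_zero, if_neg, hn', if_false, h1, h2, h3]
    have hP : ((N + 1).choose (n + 1) : ℝ) = (N.choose n : ℝ) + (N.choose (n + 1) : ℝ) := by
      exact_mod_cast congrArg (Nat.cast (R := ℝ)) (Nat.choose_succ_succ N n)
    have hq : (N.choose (n + 1) : ℝ) * (n + 1) = (N.choose n : ℝ) * ((N : ℝ) - n) := by
      have := Nat.choose_succ_right_eq N n
      have hsub : ((N - n : ℕ) : ℝ) = (N : ℝ) - n := by
        have : n ≤ N := by omega
        push_cast [this]; ring
      calc (N.choose (n + 1) : ℝ) * (n + 1) = ((N.choose (n + 1) * (n + 1) : ℕ) : ℝ) := by push_cast; ring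
        _ = ((N.choose n * (N - n) : ℕ) : ℝ) := by rw [this]
        _ = (N.choose n : ℝ) * ((N : ℝ) - n) := by push_cast; rw [hsub]
    have hNr : (N : ℝ) = b * n + a + b := by push_cast [hN]; ring
    have hN0 : (N : ℝ) ≠ 0 := by positivity
    have hN1 : (N : ℝ) + 1 ≠ 0 := by positivity
    rw [hP]
    field_simp
    push_cast
    nlinarith [hq, hNr, sq_nonneg ((N:ℝ))]

lemma Rn_def (b a n : ℕ) (hn : n ≠ 0) :
    Rn b a n = (a : ℝ) / ((b * n + a : ℕ) : ℝ) * ((b * n + a).choose n : ℝ) := by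
  simp only [Rn, if_neg hn]

lemma Rn_conv (b : ℕ) (hb : 1 ≤ b) (n : ℕ) : ∀ a,
    ∑ k ∈ Finset.range (n + 1), Rn b 1 k * Rn b (a + 1) (n - k) = Rn b (a + 2) n := by
  induction n with
  | zero => intro a; simp [Rn_zero]
  | succ n IH =>
    have key : ∀ a, ∑ k ∈ Finset.range (n + 2), Rn b 1 k * Rn b (a + 1) (n + 1 - k)
        = (∑ k ∈ Finset.range (n + 2), Rn b 1 k * Rn b a (n + 1 - k))
          + ∑ k ∈ Finset.range (n + 1), Rn b 1 k * Rn b (a + b) (n - k) := by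
      intro a
      rw [Finset.sum_range_succ, Finset.sum_range_succ (f := fun k => Rn b 1 k * Rn b a (n + 1 - k))]
      have e1 : ∀ k ∈ Finset.range (n + 1), Rn b 1 k * Rn b (a + 1) (n + 1 - k)
          = Rn b 1 k * Rn b a (n + 1 - k) + Rn b 1 k * Rn b (a + b) (n - k) := by
        intro k hk
        have hk' : k ≤ n := Nat.lt_succ_iff.mp (Finset.mem_range.mp hk)
        have h : n + 1 - k = (n - k) + 1 := by omega
        rw [h, Rn_rec b a (n - k) hb, mul_add]
      rw [Finset.sum_congr rfl e1, Finset.sum_add_distrib]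
      simp only [Nat.sub_self, Rn_zero, mul_one]
      ring
    intro a
    induction a with
    | zero =>
      rw [key 0]
      have h0 : ∑ k ∈ Finset.range (n + 2), Rn b 1 k * Rn b 0 (n + 1 - k) = Rn b 1 (n + 1) := by
        rw [Finset.sum_range_succ]
        have hz : ∑ k ∈ Finset.range (n + 1), Rn b 1 k * Rn b 0 (n + 1 - k) = 0 :=
          Finset.sum_eq_zero (fun k hk => by
            have hk' := Finset.mem_range.mp hk
            rw [Rn_of_zero b _ (by omega), mul_zero])
        rw [hz, Nat.sub_self, Rn_zero, zero_add, mul_one]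
      rw [h0]
      obtain ⟨b', rfl⟩ : ∃ b', b = b' + 1 := ⟨b - 1, by omega⟩
      have h1 : ∑ k ∈ Finset.range (n + 1), Rn (b' + 1) 1 k * Rn (b' + 1) (0 + (b' + 1)) (n - k)
          = Rn (b' + 1) (b' + 2) n := by
        rw [show 0 + (b' + 1) = b' + 1 from by omega]
        exact IH b'
      rw [h1]
      have h2 := Rn_rec (b' + 1) 1 n hb
      rw [show 1 + (b' + 1) = b' + 2 from by omega] at h2
      rw [show (0 : ℕ) + 2 = 1 + 1 from rfl]
      exact h2.symm
    | succ a IHa =>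
      rw [key (a + 1)]
      rw [IHa]
      have h1 : ∑ k ∈ Finset.range (n + 1), Rn b 1 k * Rn b (a + 1 + b) (n - k)
          = Rn b (a + b + 2) n := by
        rw [show a + 1 + b = (a + b) + 1 from by omega]
        exact IH (a + b)
      rw [h1]
      have h2 := Rn_rec b (a + 2) n hb
      rw [show a + 2 + b = a + b + 2 from by omega] at h2
      rw [show a + 1 + 2 = a + 2 + 1 from by omega]
      exact h2.symm

lemma Rn_shift (b n : ℕ) (hb : 1 ≤ b) : Rn b 1 (n + 1) = Rn b b n := by
  have key : ∀ m : ℕ, Rn b 1 (m + 1) = ((b * (m + 1)).choose m : ℝ) / (m + 1) := by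
    intro m
    rw [Rn_def b 1 (m + 1) (Nat.succ_ne_zero m)]
    set N : ℕ := b * (m + 1) with hN
    have h1 : b * (m + 1) + 1 = N + 1 := rfl
    have hs := Nat.add_one_mul_choose_eq N m
    -- (N+1) * choose N m = choose (N+1) (m+1) * (m+1)
    have hsr : ((N : ℝ) + 1) * (N.choose m : ℝ) = ((N + 1).choose (m + 1) : ℝ) * ((m : ℝ) + 1) := by
      exact_mod_cast congrArg (Nat.cast (R := ℝ)) hs
    have hN1 : (N : ℝ) + 1 ≠ 0 := by positivity
    have hm1 : (m : ℝ) + 1 ≠ 0 := by positivity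
    rw [h1]
    push_cast
    field_simp
    linarith [hsr]
  rcases Nat.eq_zero_or_pos n with rfl | hn
  · rw [key 0, Rn_zero]
    simp [Nat.choose_zero_right]
  · rw [key n, Rn_def b b n hn.ne']
    have hbn : (b * n + b : ℕ) = b * (n + 1) := by ring
    rw [hbn]
    have hb0 : ((b * (n + 1) : ℕ) : ℝ) ≠ 0 := by
      have : 0 < b * (n + 1) := Nat.mul_pos hb (Nat.succ_pos n)
      exact_mod_cast this.ne'
    -- goal: choose (b(n+1)) n / (n+1) = b / (b(n+1)) * choose (b(n+1)) n
    have hr : (b : ℝ) / ((b * (n + 1) : ℕ) : ℝ) = 1 / ((n : ℝ) + 1) := by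
      push_cast
      rw [div_eq_div_iff (by exact_mod_cast hb0) (by positivity)]
      ring
    rw [hr]
    ring

lemma norm_summable_of_nonneg {f : ℕ → ℝ} (hf : ∀ n, 0 ≤ f n) (hs : Summable f) :
    Summable fun n => ‖f n‖ :=
  hs.congr (fun n => (Real.norm_of_nonneg (hf n)).symm)

lemma trunc_cauchy (A B : ℕ → ℝ) (hA : ∀ n, 0 ≤ A n) (hB : ∀ n, 0 ≤ B n) (N : ℕ) :
    ∑ m ∈ Finset.range (N + 1), ∑ k ∈ Finset.range (m + 1), A k * B (m - k)
      ≤ (∑ k ∈ Finset.range (N + 1), A k) * (∑ j ∈ Finset.range (N + 1), B j) := by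
  set A' : ℕ → ℝ := fun n => if n ∈ Finset.range (N + 1) then A n else 0 with hA'
  set B' : ℕ → ℝ := fun n => if n ∈ Finset.range (N + 1) then B n else 0 with hB'
  have hA'nn : ∀ n, 0 ≤ A' n := fun n => by
    simp only [hA']; split
    · exact hA n
    · exact le_refl 0
  have hB'nn : ∀ n, 0 ≤ B' n := fun n => by
    simp only [hB']; split
    · exact hB n
    · exact le_refl 0
  have hsA : Summable A' := summable_of_ne_finset_zero (s := Finset.range (N + 1))
    (fun n hn => by simp only [hA', if_neg hn])
  have hsB : Summable B' := summable_of_ne_finset_zero (s := Finset.range (N + 1))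
    (fun n hn => by simp only [hB', if_neg hn])
  have hnA := norm_summable_of_nonneg hA'nn hsA
  have hnB := norm_summable_of_nonneg hB'nn hsB
  have hconv : Summable fun n => ∑ k ∈ Finset.range (n + 1), A' k * B' (n - k) :=
    (summable_norm_sum_mul_range_of_summable_norm hnA hnB).of_norm
  have hcnn : ∀ n, 0 ≤ ∑ k ∈ Finset.range (n + 1), A' k * B' (n - k) := fun n =>
    Finset.sum_nonneg fun k _ => mul_nonneg (hA'nn k) (hB'nn (n - k))
  have htsum : ((∑' n, A' n) * ∑' n, B' n) = ∑' n, ∑ k ∈ Finset.range (n + 1), A' k * B' (n - k) :=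
    tsum_mul_tsum_eq_tsum_sum_range_of_summable_norm hnA hnB
  have hA'tsum : ∑' n, A' n = ∑ k ∈ Finset.range (N + 1), A k := by
    rw [tsum_eq_sum (s := Finset.range (N + 1)) (fun n hn => by simp only [hA', if_neg hn])]
    exact Finset.sum_congr rfl fun k hk => by simp only [hA', if_pos hk]
  have hB'tsum : ∑' n, B' n = ∑ k ∈ Finset.range (N + 1), B k := by
    rw [tsum_eq_sum (s := Finset.range (N + 1)) (fun n hn => by simp only [hB', if_neg hn])]
    exact Finset.sum_congr rfl fun k hk => by simp only [hB', if_pos hk]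
  calc ∑ m ∈ Finset.range (N + 1), ∑ k ∈ Finset.range (m + 1), A k * B (m - k)
      = ∑ m ∈ Finset.range (N + 1), ∑ k ∈ Finset.range (m + 1), A' k * B' (m - k) := by
        refine Finset.sum_congr rfl fun m hm => Finset.sum_congr rfl fun k hk => ?_
        have hm' := Finset.mem_range.mp hm
        have hk' := Finset.mem_range.mp hk
        have h1 : k ∈ Finset.range (N + 1) := Finset.mem_range.mpr (by omega)
        have h2 : m - k ∈ Finset.range (N + 1) := Finset.mem_range.mpr (by omega)
        simp only [hA', hB', if_pos h1, if_pos h2]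
    _ ≤ ∑' n, ∑ k ∈ Finset.range (n + 1), A' k * B' (n - k) :=
        hconv.sum_le_tsum _ (fun n _ => hcnn n)
    _ = (∑ k ∈ Finset.range (N + 1), A k) * (∑ j ∈ Finset.range (N + 1), B j) := by
        rw [← htsum, hA'tsum, hB'tsum]

lemma conv_term (b : ℕ) (hb : 1 ≤ b) (x : ℝ) (j n : ℕ) (hj : 1 ≤ j) :
    ∑ k ∈ Finset.range (n + 1), (Rn b 1 k * x ^ k) * (Rn b j (n - k) * x ^ (n - k))
      = Rn b (j + 1) n * x ^ n := by
  obtain ⟨j', rfl⟩ : ∃ j', j = j' + 1 := ⟨j - 1, by omega⟩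
  have := Rn_conv b hb n j'
  calc ∑ k ∈ Finset.range (n + 1), (Rn b 1 k * x ^ k) * (Rn b (j' + 1) (n - k) * x ^ (n - k))
      = ∑ k ∈ Finset.range (n + 1), (Rn b 1 k * Rn b (j' + 1) (n - k)) * x ^ n := by
        refine Finset.sum_congr rfl fun k hk => ?_
        have hk' := Finset.mem_range.mp hk
        have hxp : x ^ k * x ^ (n - k) = x ^ n := by rw [← pow_add]; congr 1; omega
        rw [mul_mul_mul_comm, hxp]
    _ = Rn b (j' + 2) n * x ^ n := by rw [← Finset.sum_mul, this]

lemma pow_bound (b : ℕ) (hb : 1 ≤ b) (x : ℝ) (hx : 0 ≤ x) (j : ℕ) (hj : 1 ≤ j) (N : ℕ) :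
    ∑ n ∈ Finset.range (N + 1), Rn b j n * x ^ n
      ≤ (∑ n ∈ Finset.range (N + 1), Rn b 1 n * x ^ n) ^ j := by
  induction j with
  | zero => omega
  | succ j IH =>
    rcases Nat.eq_zero_or_pos j with rfl | hj'
    · simp
    have h1 : ∑ n ∈ Finset.range (N + 1), Rn b (j + 1) n * x ^ n
        = ∑ m ∈ Finset.range (N + 1), ∑ k ∈ Finset.range (m + 1),
            (Rn b 1 k * x ^ k) * (Rn b j (m - k) * x ^ (m - k)) := by
      refine Finset.sum_congr rfl fun m _ => (conv_term b hb x j m hj').symm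
    rw [h1]
    have h2 := trunc_cauchy (fun k => Rn b 1 k * x ^ k) (fun k => Rn b j k * x ^ k)
      (fun k => mul_nonneg (Rn_nonneg b 1 k) (pow_nonneg hx k))
      (fun k => mul_nonneg (Rn_nonneg b j k) (pow_nonneg hx k)) N
    refine h2.trans ?_
    rw [pow_succ']
    have hs1 : (0:ℝ) ≤ ∑ n ∈ Finset.range (N + 1), Rn b 1 n * x ^ n :=
      Finset.sum_nonneg fun k _ => mul_nonneg (Rn_nonneg b 1 k) (pow_nonneg hx k)
    exact mul_le_mul_of_nonneg_left (IH hj') hs1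

lemma partial_le_root (b : ℕ) (hb : 1 ≤ b) (x y : ℝ) (hx : 0 ≤ x) (hy : 1 ≤ y)
    (heq : 1 + x * y ^ b = y) (N : ℕ) :
    ∑ n ∈ Finset.range N, Rn b 1 n * x ^ n ≤ y := by
  induction N with
  | zero => simp; linarith
  | succ N IH =>
    rcases Nat.eq_zero_or_pos N with rfl | hN
    · simp [Rn_zero]; linarith
    obtain ⟨M, rfl⟩ : ∃ M, N = M + 1 := ⟨N - 1, by omega⟩
    rw [Finset.sum_range_succ']
    simp only [Rn_zero, pow_zero, mul_one]
    have hshift : ∀ i, Rn b 1 (i + 1) * x ^ (i + 1) = x * (Rn b b i * x ^ i) := by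
      intro i
      rw [Rn_shift b i hb, pow_succ]
      ring
    rw [Finset.sum_congr rfl (fun i _ => hshift i), ← Finset.mul_sum]
    have h1 : ∑ i ∈ Finset.range (M + 1), Rn b b i * x ^ i
        ≤ (∑ i ∈ Finset.range (M + 1), Rn b 1 i * x ^ i) ^ b :=
      pow_bound b hb x hx b hb M
    have h2 : (∑ i ∈ Finset.range (M + 1), Rn b 1 i * x ^ i) ^ b ≤ y ^ b := by
      refine pow_le_pow_left₀ ?_ (IH) b
      exact Finset.sum_nonneg fun k _ => mul_nonneg (Rn_nonneg b 1 k) (pow_nonneg hx k)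
    nlinarith [mul_le_mul_of_nonneg_left h1 hx, mul_le_mul_of_nonneg_left h2 hx]

noncomputable def genCatalan (p n : ℕ) : ℝ :=
  (Nat.choose ((p + 1) * n + 1) n : ℝ) / ((p + 1) * n + 1 : ℕ)
noncomputable def Hgen (p : ℕ) (x : ℝ) : ℝ := ∑' n : ℕ, genCatalan p n * x ^ n

section main
variable (b : ℕ) (x y : ℝ)

lemma term_nonneg (hx : 0 ≤ x) (j n : ℕ) : 0 ≤ Rn b j n * x ^ n :=
  mul_nonneg (Rn_nonneg b j n) (pow_nonneg hx n)

lemma summable_one (hb : 1 ≤ b) (hx : 0 ≤ x) (hy : 1 ≤ y) (heq : 1 + x * y ^ b = y) :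
    Summable fun n => Rn b 1 n * x ^ n :=
  summable_of_sum_range_le (term_nonneg b x hx 1) (partial_le_root b hb x y hx hy heq)

lemma tsum_pow (hb : 1 ≤ b) (hx : 0 ≤ x) (hy : 1 ≤ y) (heq : 1 + x * y ^ b = y) :
    ∀ j, 1 ≤ j → Summable (fun n => Rn b j n * x ^ n) ∧
      ∑' n, Rn b j n * x ^ n = (∑' n, Rn b 1 n * x ^ n) ^ j := by
  intro j hj
  induction j with
  | zero => omega
  | succ j IH =>
    rcases Nat.eq_zero_or_pos j with rfl | hj'
    · exact ⟨summable_one b x y hb hx hy heq, by rw [pow_one]⟩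
    obtain ⟨hsj, hej⟩ := IH hj'
    have hn1 := norm_summable_of_nonneg (term_nonneg b x hx 1) (summable_one b x y hb hx hy heq)
    have hnj := norm_summable_of_nonneg (term_nonneg b x hx j) hsj
    have hc := summable_norm_sum_mul_range_of_summable_norm hn1 hnj
    have hfun : (fun n => ∑ k ∈ Finset.range (n + 1),
        (Rn b 1 k * x ^ k) * (Rn b j (n - k) * x ^ (n - k)))
        = fun n => Rn b (j + 1) n * x ^ n := funext fun n => conv_term b hb x j n hj'
    have hsum : Summable fun n => Rn b (j + 1) n * x ^ n := by
      have := hc.of_norm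
      rwa [hfun] at this
    refine ⟨hsum, ?_⟩
    have ht := tsum_mul_tsum_eq_tsum_sum_range_of_summable_norm hn1 hnj
    rw [hfun] at ht
    rw [← ht, hej, pow_succ']
lemma H_eq (hb : 1 ≤ b) (hx : 0 ≤ x) (hy : 1 ≤ y) (heq : 1 + x * y ^ b = y) :
    (∑' n, Rn b 1 n * x ^ n) = 1 + x * (∑' n, Rn b 1 n * x ^ n) ^ b := by
  have hs1 := summable_one b x y hb hx hy heq
  have hshift : (fun n => Rn b 1 (n + 1) * x ^ (n + 1)) = fun n => x * (Rn b b n * x ^ n) := by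
    funext n; rw [Rn_shift b n hb, pow_succ]; ring
  have h2 : (∑' n, Rn b 1 (n + 1) * x ^ (n + 1)) = x * (∑' n, Rn b 1 n * x ^ n) ^ b := by
    rw [show (fun n => Rn b 1 (n + 1) * x ^ (n + 1)) = fun n => x * (Rn b b n * x ^ n) from hshift]
    rw [tsum_mul_left, (tsum_pow b x y hb hx hy heq b hb).2]
  conv_lhs => rw [hs1.tsum_eq_zero_add]
  rw [h2, Rn_zero, pow_zero, mul_one]
end main

lemma genCatalan_eq (p n : ℕ) : genCatalan p n = Rn (p + 1) 1 n := by
  rcases Nat.eq_zero_or_pos n with rfl | hn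
  · simp [genCatalan, Rn_zero]
  · rw [Rn_def (p + 1) 1 n hn.ne']
    unfold genCatalan
    push_cast
    ring

lemma root_exists (p : ℕ) (hp : 0 < p) (x : ℝ) (hx0 : 0 ≤ x)
    (hxr : x ≤ (p : ℝ) ^ p / ((p : ℝ) + 1) ^ (p + 1)) :
    ∃ y : ℝ, 1 ≤ y ∧ 1 + x * y ^ (p + 1) = y := by
  have hp0 : (0 : ℝ) < p := Nat.cast_pos.mpr hp
  set c : ℝ := ((p : ℝ) + 1) / p with hc
  have hc1 : (1 : ℝ) ≤ c := by rw [le_div_iff₀ hp0]; linarith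
  set f : ℝ → ℝ := fun t => 1 + x * t ^ (p + 1) - t with hf
  have hcont : ContinuousOn f (Set.Icc 1 c) :=
    ((continuous_const.add (continuous_const.mul (continuous_pow (p + 1)))).sub continuous_id).continuousOn
  have hf1 : 0 ≤ f 1 := by simp [hf]; linarith
  have hfc : f c ≤ 0 := by
    have hcp : c ^ (p + 1) = ((p : ℝ) + 1) ^ (p + 1) / (p : ℝ) ^ (p + 1) := div_pow _ _ _
    have hkey : (p : ℝ) ^ p / ((p : ℝ) + 1) ^ (p + 1) * c ^ (p + 1) = 1 / p := by
      rw [hcp]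
      have h1 : ((p : ℝ) + 1) ^ (p + 1) ≠ 0 := by positivity
      have h2 : (p : ℝ) ^ (p + 1) ≠ 0 := by positivity
      rw [div_mul_div_comm, div_eq_div_iff (by positivity) (by positivity)]
      rw [pow_succ]
      ring
    have hle : x * c ^ (p + 1) ≤ 1 / p := by
      calc x * c ^ (p + 1) ≤ (p : ℝ) ^ p / ((p : ℝ) + 1) ^ (p + 1) * c ^ (p + 1) :=
            mul_le_mul_of_nonneg_right hxr (by positivity)
        _ = 1 / p := hkey
    have hceq : c = 1 + 1 / p := by rw [hc]; field_simp
    simp only [hf]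
    linarith
  have hsub := intermediate_value_Icc' hc1 hcont
  have h0 : (0 : ℝ) ∈ Set.Icc (f c) (f 1) := ⟨hfc, hf1⟩
  obtain ⟨y, hyI, hfy⟩ := hsub h0
  refine ⟨y, hyI.1, by simp only [hf] at hfy; linarith⟩

theorem Hgen_satisfies_implicit_eq (p : ℕ) (hp : 0 < p) (x : ℝ)
    (hx : x ∈ Set.Icc 0 ((p : ℝ) ^ p / ((p : ℝ) + 1) ^ (p + 1))) :
    x * (Hgen p x) ^ (p + 1) = Hgen p x - 1 ∧
    (∀ s : ℝ, 0 < s → x * s ^ (p + 1) = s - 1 → Hgen p x ≤ s) := by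
  obtain ⟨hx0, hxr⟩ := hx
  have hb : 1 ≤ p + 1 := Nat.succ_le_succ (Nat.zero_le p)
  have hH : Hgen p x = ∑' n, Rn (p + 1) 1 n * x ^ n :=
    tsum_congr fun n => by rw [genCatalan_eq]
  obtain ⟨y, hy1, hyeq⟩ := root_exists p hp x hx0 hxr
  have heq := H_eq (p + 1) x y hb hx0 hy1 hyeq
  constructor
  · rw [hH]; linarith [heq]
  · intro s hs hseq
    have hsp : 0 ≤ x * s ^ (p + 1) := mul_nonneg hx0 (le_of_lt (pow_pos hs _))
    have hs1 : 1 ≤ s := by linarith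
    have hseq' : 1 + x * s ^ (p + 1) = s := by linarith
    rw [hH]
    exact Real.tsum_le_of_sum_range_le (term_nonneg (p + 1) x hx0 1)
      (partial_le_root (p + 1) hb x s hx0 hs1 hseq')
end

section
/- Fix a positive integer p and nonnegative integer d. Let S(n,d) be the number of monotonic lattice paths from (0,0) to (n, pn+d) weakly below the line y = px + d (with S(0,d)=1). Then S(n, d+1) = ∑_{i=0}^{n} S(i,d) S(n-i, 0). -/
/-- A monotonic lattice path with `L` steps is encoded as `f : Fin L → Bool`,
where `true` is an up-step `(0,1)` and `false` is a right-step `(1,0)`.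
`upsIn f k` is the number of up-steps among the first `k` steps. -/
def upsIn {L : ℕ} (f : Fin L → Bool) (k : ℕ) : ℕ :=
  (Finset.univ.filter (fun i : Fin L => (i : ℕ) < k ∧ f i = true)).card

/-- The number of right-steps among the first `k` steps. -/
def rightsIn {L : ℕ} (f : Fin L → Bool) (k : ℕ) : ℕ :=
  (Finset.univ.filter (fun i : Fin L => (i : ℕ) < k ∧ f i = false)).card

/-- `weakCount p d n` is the number of monotonic lattice paths from `(0,0)` to
`(n, p*n + d)` all of whose lattice points lie weakly below the line `y = p*x + d`. -/
noncomputable def weakCount (p d n : ℕ) : ℕ :=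
  Nat.card {f : Fin ((p + 1) * n + d) → Bool //
    upsIn f ((p + 1) * n + d) = p * n + d ∧
    ∀ k ≤ (p + 1) * n + d, upsIn f k ≤ p * rightsIn f k + d}

/-- `strictCount p d n` is the number of monotonic lattice paths from `(0,0)` to
`(n, p*n + d)` all of whose lattice points, except the endpoints, lie strictly below
the line `y = p*x + d` (with the convention `strictCount p 0 0 = 0`). -/
noncomputable def strictCount (p d n : ℕ) : ℕ :=
  if n = 0 ∧ d = 0 then 0 else
  Nat.card {f : Fin ((p + 1) * n + d) → Bool //
    upsIn f ((p + 1) * n + d) = p * n + d ∧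
    ∀ k, 0 < k → k < (p + 1) * n + d → upsIn f k < p * rightsIn f k + d}


def cntIn {L : ℕ} (f : Fin L → Bool) (k : ℕ) (b : Bool) : ℕ :=
  (Finset.univ.filter (fun i : Fin L => (i : ℕ) < k ∧ f i = b)).card

lemma upsIn_eq {L : ℕ} (f : Fin L → Bool) (k : ℕ) : upsIn f k = cntIn f k true := rfl
lemma rightsIn_eq {L : ℕ} (f : Fin L → Bool) (k : ℕ) : rightsIn f k = cntIn f k false := rfl

lemma cntIn_eq_sum {L : ℕ} (f : Fin L → Bool) (k : ℕ) (b : Bool) :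
    cntIn f k b = ∑ i : Fin L, if (i : ℕ) < k ∧ f i = b then 1 else 0 :=
  Finset.card_filter _ _

lemma cntIn_zero {L : ℕ} (f : Fin L → Bool) (b : Bool) : cntIn f 0 b = 0 := by
  simp [cntIn]

lemma cntIn_stable {L : ℕ} (f : Fin L → Bool) {k : ℕ} (hk : L ≤ k) (b : Bool) :
    cntIn f k b = cntIn f L b := by
  unfold cntIn
  congr 1
  apply Finset.filter_congr
  intro i _
  have : (i : ℕ) < L := i.2
  simp only [this, true_and, eq_iff_iff]
  constructor
  · exact fun h => h.2
  · exact fun h => ⟨lt_of_lt_of_le this hk, h⟩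

lemma cntIn_cast {L L' : ℕ} (e : L' = L) (f : Fin L → Bool) (k : ℕ) (b : Bool) :
    cntIn (f ∘ Fin.cast e) k b = cntIn f k b := by
  rw [cntIn_eq_sum, cntIn_eq_sum]
  apply Fintype.sum_equiv (finCongr e)
  intro i
  simp [finCongr]
  exact if_congr Iff.rfl rfl rfl

lemma cntIn_append {L1 L2 : ℕ} (g : Fin L1 → Bool) (h : Fin L2 → Bool) (k : ℕ) (b : Bool) :
    cntIn (Fin.append g h) k b = cntIn g k b + cntIn h (k - L1) b := by
  rw [cntIn_eq_sum, cntIn_eq_sum, cntIn_eq_sum, Fin.sum_univ_add]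
  congr 1
  · apply Finset.sum_congr rfl
    intro i _
    simp [Fin.append_left]
  · apply Finset.sum_congr rfl
    intro i _
    rw [Fin.append_right]
    congr 1
    simp only [Fin.coe_natAdd, eq_iff_iff]
    constructor
    · rintro ⟨h1, h2⟩; exact ⟨by omega, h2⟩
    · rintro ⟨h1, h2⟩; exact ⟨by omega, h2⟩

lemma card_filter_lt {L k : ℕ} (hk : k ≤ L) :
    (Finset.univ.filter (fun i : Fin L => (i : ℕ) < k)).card = k := by
  have : (Finset.univ.filter (fun i : Fin L => (i : ℕ) < k))
      = Finset.map (Fin.castLEEmb hk) Finset.univ := by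
    ext i
    simp only [Finset.mem_filter, Finset.mem_univ, true_and, Finset.mem_map,
      Fin.castLEEmb_apply]
    constructor
    · intro h; exact ⟨⟨(i : ℕ), h⟩, by ext; simp⟩
    · rintro ⟨j, -, rfl⟩; simpa using j.2
  rw [this, Finset.card_map, Finset.card_univ, Fintype.card_fin]

lemma cntIn_total {L : ℕ} (f : Fin L → Bool) {k : ℕ} (hk : k ≤ L) :
    cntIn f k true + cntIn f k false = k := by
  have h1 : (∑ i : Fin L, if (i:ℕ) < k then (1:ℕ) else 0) = k := by
    rw [← Finset.card_filter]
    exact card_filter_lt hk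
  have h2 : (∑ i : Fin L, ((if (i:ℕ) < k ∧ f i = true then (1:ℕ) else 0)
      + (if (i:ℕ) < k ∧ f i = false then 1 else 0)))
      = ∑ i : Fin L, if (i:ℕ) < k then (1:ℕ) else 0 := by
    apply Finset.sum_congr rfl
    intro i _
    cases hfi : f i <;> by_cases hik : (i:ℕ) < k <;> simp [hfi, hik]
  rw [cntIn_eq_sum, cntIn_eq_sum, ← Finset.sum_add_distrib, h2, h1]

lemma cntIn_succ {L : ℕ} (f : Fin L → Bool) {k : ℕ} (hk : k < L) (b : Bool) :
    cntIn f (k + 1) b = cntIn f k b + if f ⟨k, hk⟩ = b then 1 else 0 := by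
  rw [cntIn_eq_sum, cntIn_eq_sum]
  have key : ∀ i : Fin L, (if (i:ℕ) < k+1 ∧ f i = b then (1:ℕ) else 0)
      = (if (i:ℕ) < k ∧ f i = b then 1 else 0)
        + (if i = ⟨k, hk⟩ then (if f i = b then 1 else 0) else 0) := by
    intro i
    by_cases h3 : i = ⟨k, hk⟩
    · subst h3
      simp
    · have : (i : ℕ) ≠ k := fun h => h3 (Fin.ext h)
      by_cases h1 : (i:ℕ) < k <;> by_cases h2 : f i = b <;>
        simp [h1, h2, h3] <;> omega
  rw [Finset.sum_congr rfl (fun i _ => key i), Finset.sum_add_distrib,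
    Finset.sum_ite_eq' Finset.univ (⟨k, hk⟩ : Fin L)]
  simp

lemma cntIn_mono {L : ℕ} (f : Fin L → Bool) {k k' : ℕ} (h : k ≤ k') (b : Bool) :
    cntIn f k b ≤ cntIn f k' b := by
  apply Finset.card_le_card
  intro i hi
  simp only [Finset.mem_filter, Finset.mem_univ, true_and] at *
  exact ⟨lt_of_lt_of_le hi.1 h, hi.2⟩

def takeF {L : ℕ} (f : Fin L → Bool) (K : ℕ) (hK : K ≤ L) : Fin K → Bool :=
  fun j => f (Fin.castLE hK j)

def dropF {L : ℕ} (f : Fin L → Bool) (K : ℕ) (hK : K ≤ L) : Fin (L - K) → Bool :=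
  fun j => f ⟨K + (j : ℕ), by omega⟩

lemma append_take_drop {L : ℕ} (f : Fin L → Bool) (K : ℕ) (hK : K ≤ L) :
    Fin.append (takeF f K hK) (dropF f K hK)
      = f ∘ Fin.cast (by omega : K + (L - K) = L) := by
  funext x
  simp only [Fin.append, Fin.addCases, takeF, dropF, Function.comp_apply]
  by_cases h : (x : ℕ) < K
  · simp only [h, dif_pos]
    apply congrArg
    apply Fin.ext
    simp
  · simp only [h, dite_false, eq_rec_constant]
    apply congrArg
    apply Fin.ext
    simp only [Fin.coe_cast, Fin.coe_subNat]
    omega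

lemma cntIn_take {L : ℕ} (f : Fin L → Bool) {K : ℕ} (hK : K ≤ L) {m : ℕ} (hm : m ≤ K)
    (b : Bool) : cntIn (takeF f K hK) m b = cntIn f m b := by
  have h := cntIn_append (takeF f K hK) (dropF f K hK) m b
  rw [append_take_drop, cntIn_cast] at h
  rw [h, Nat.sub_eq_zero_of_le hm, cntIn_zero, Nat.add_zero]

lemma cntIn_drop {L : ℕ} (f : Fin L → Bool) {K : ℕ} (hK : K ≤ L) (m : ℕ) (b : Bool) :
    cntIn f (K + m) b = cntIn f K b + cntIn (dropF f K hK) m b := by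
  have h := cntIn_append (takeF f K hK) (dropF f K hK) (K + m) b
  rw [append_take_drop, cntIn_cast] at h
  rw [h, cntIn_stable _ (by omega : K ≤ K + m), cntIn_take f hK le_rfl,
    Nat.add_sub_cancel_left]

lemma cnt_one_true {m : ℕ} (hm : 1 ≤ m) : cntIn (fun _ : Fin 1 => true) m true = 1 := by
  rw [cntIn_stable _ (by omega : 1 ≤ m)]
  decide

lemma cnt_one_false (m : ℕ) : cntIn (fun _ : Fin 1 => true) m false = 0 := by
  simp [cntIn]

lemma append_eval_left {a b : ℕ} (u : Fin a → Bool) (v : Fin b → Bool) (x : Fin (a + b))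
    (h : (x : ℕ) < a) : Fin.append u v x = u ⟨(x : ℕ), h⟩ := by
  induction x using Fin.addCases with
  | left i => rw [Fin.append_left]; congr 1
  | right j => exact absurd h (by simp)

lemma append_eval_right {a b : ℕ} (u : Fin a → Bool) (v : Fin b → Bool) (x : Fin (a + b))
    (h : a ≤ (x : ℕ)) : Fin.append u v x = v ⟨(x : ℕ) - a, by omega⟩ := by
  induction x using Fin.addCases with
  | left i => exact absurd h (by simpa using i.2.not_le)
  | right j => rw [Fin.append_right]; congr 1; exact Fin.ext (by simp)

section Glue

variable (p d n : ℕ)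

lemma glue_len {i : ℕ} (hin : i ≤ n) :
    (p+1)*n + (d+1) = (((p+1)*i + d) + 1) + ((p+1)*(n-i) + 0) := by
  have h1 : (p+1)*i + ((p+1)*(n-i)) = (p+1)*n := by
    rw [← Nat.mul_add, Nat.add_sub_cancel' hin]
  omega

def glue {i : ℕ} (hin : i ≤ n) (g : Fin ((p+1)*i + d) → Bool)
    (h : Fin ((p+1)*(n-i) + 0) → Bool) : Fin ((p+1)*n + (d+1)) → Bool :=
  (Fin.append (Fin.append g (fun _ : Fin 1 => true)) h) ∘ Fin.cast (glue_len p d n hin)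

lemma cntIn_glue {i : ℕ} (hin : i ≤ n) (g : Fin ((p+1)*i + d) → Bool)
    (h : Fin ((p+1)*(n-i) + 0) → Bool) (k : ℕ) (b : Bool) :
    cntIn (glue p d n hin g h) k b
      = cntIn g k b + cntIn (fun _ : Fin 1 => true) (k - ((p+1)*i + d)) b
        + cntIn h (k - (((p+1)*i + d) + 1)) b := by
  unfold glue
  rw [cntIn_cast, cntIn_append, cntIn_append]

lemma glue_eval_lt {i : ℕ} (hin : i ≤ n) (g : Fin ((p+1)*i + d) → Bool)
    (h : Fin ((p+1)*(n-i) + 0) → Bool) (x : Fin ((p+1)*n + (d+1)))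
    (hx : (x : ℕ) < (p+1)*i + d) :
    glue p d n hin g h x = g ⟨(x : ℕ), hx⟩ := by
  unfold glue
  rw [Function.comp_apply, append_eval_left _ _ _ (by simp; omega),
    append_eval_left _ _ _ (by simp [hx])]
  congr 1

lemma glue_eval_eq {i : ℕ} (hin : i ≤ n) (g : Fin ((p+1)*i + d) → Bool)
    (h : Fin ((p+1)*(n-i) + 0) → Bool) (x : Fin ((p+1)*n + (d+1)))
    (hx : (x : ℕ) = (p+1)*i + d) :
    glue p d n hin g h x = true := by
  unfold glue
  rw [Function.comp_apply, append_eval_left _ _ _ (by simp; omega),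
    append_eval_right _ _ _ (by simp [hx])]

lemma glue_eval_gt {i : ℕ} (hin : i ≤ n) (g : Fin ((p+1)*i + d) → Bool)
    (h : Fin ((p+1)*(n-i) + 0) → Bool) (x : Fin ((p+1)*n + (d+1)))
    (hx : (p+1)*i + d + 1 ≤ (x : ℕ)) :
    glue p d n hin g h x = h ⟨(x : ℕ) - ((p+1)*i + d + 1), by
      have := x.2
      have := glue_len p d n hin
      omega⟩ := by
  unfold glue
  rw [Function.comp_apply, append_eval_right _ _ _ (by simp; omega)]
  congr 1

end Glue

section Main

def Wk (p d n : ℕ) :=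
  {f : Fin ((p + 1) * n + d) → Bool //
    upsIn f ((p + 1) * n + d) = p * n + d ∧
    ∀ k ≤ (p + 1) * n + d, upsIn f k ≤ p * rightsIn f k + d}

lemma weakCount_eq (p d n : ℕ) : weakCount p d n = Nat.card (Wk p d n) := rfl

variable (p d n : ℕ)

lemma glue_mem {i : ℕ} (hin : i ≤ n) (g : Fin ((p+1)*i + d) → Bool)
    (h : Fin ((p+1)*(n-i) + 0) → Bool)
    (hg1 : cntIn g ((p+1)*i + d) true = p*i + d)
    (hg2 : ∀ k ≤ (p+1)*i + d, cntIn g k true ≤ p * cntIn g k false + d)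
    (hh1 : cntIn h ((p+1)*(n-i) + 0) true = p*(n-i) + 0)
    (hh2 : ∀ k ≤ (p+1)*(n-i) + 0, cntIn h k true ≤ p * cntIn h k false + 0) :
    cntIn (glue p d n hin g h) ((p+1)*n + (d+1)) true = p*n + (d+1) ∧
    ∀ k ≤ (p+1)*n + (d+1),
      cntIn (glue p d n hin g h) k true ≤ p * cntIn (glue p d n hin g h) k false + (d+1) := by
  have hmul : (p+1)*i = p*i + i := by ring
  have hgr : cntIn g ((p+1)*i + d) false = i := by
    have := cntIn_total g (le_rfl : (p+1)*i + d ≤ (p+1)*i + d)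
    omega
  have hlen := glue_len p d n hin
  have e1 : p*i + p*(n-i) = p*n := by
    rw [← Nat.mul_add, Nat.add_sub_cancel' hin]
  constructor
  · rw [cntIn_glue, cntIn_stable g (by omega), hg1,
      cnt_one_true (by omega),
      show (p+1)*n + (d+1) - ((p+1)*i + d + 1) = (p+1)*(n-i) + 0 by omega,
      hh1]
    omega
  · intro k hk
    rw [cntIn_glue, cntIn_glue, cnt_one_false]
    by_cases hkL1 : k ≤ (p+1)*i + d
    · rw [show k - ((p+1)*i + d) = 0 from by omega,
        show k - ((p+1)*i + d + 1) = 0 from by omega, cntIn_zero, cntIn_zero, cntIn_zero]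
      have := hg2 k hkL1
      simp only [Nat.add_zero]
      omega
    · push_neg at hkL1
      have t1 : cntIn g k true = p*i + d := by
        rw [cntIn_stable g (by omega : (p+1)*i + d ≤ k)]; exact hg1
      have t2 : cntIn g k false = i := by
        rw [cntIn_stable g (by omega : (p+1)*i + d ≤ k)]; exact hgr
      rw [t1, t2, cnt_one_true (by omega)]
      have hcond := hh2 (k - ((p+1)*i + d + 1)) (by omega)
      set Ut := cntIn h (k - ((p+1)*i + d + 1)) true
      set Rf := cntIn h (k - ((p+1)*i + d + 1)) false
      have e2 : p * (i + 0 + Rf) = p*i + p*Rf := by ring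
      omega

lemma glue_eqAt {i : ℕ} (hin : i ≤ n) (g : Fin ((p+1)*i + d) → Bool)
    (h : Fin ((p+1)*(n-i) + 0) → Bool)
    (hg1 : cntIn g ((p+1)*i + d) true = p*i + d) :
    cntIn (glue p d n hin g h) ((p+1)*i + d + 1) true = p*i + d + 1 ∧
    cntIn (glue p d n hin g h) ((p+1)*i + d + 1) false = i := by
  have hmul : (p+1)*i = p*i + i := by ring
  have hgr : cntIn g ((p+1)*i + d) false = i := by
    have := cntIn_total g (le_rfl : (p+1)*i + d ≤ (p+1)*i + d)
    omega
  have s1 : (p+1)*i + d + 1 - ((p+1)*i + d) = 1 := by omega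
  have s2 : (p+1)*i + d + 1 - ((p+1)*i + d + 1) = 0 := by omega
  constructor
  · rw [cntIn_glue, s1, s2, cntIn_stable g (by omega), hg1, cnt_one_true le_rfl,
      cntIn_zero]
  · rw [cntIn_glue, s2, cntIn_stable g (by omega), hgr, cnt_one_false, cntIn_zero]
    omega

lemma glue_strictBefore {i : ℕ} (hin : i ≤ n) (g : Fin ((p+1)*i + d) → Bool)
    (h : Fin ((p+1)*(n-i) + 0) → Bool)
    (hg2 : ∀ k ≤ (p+1)*i + d, cntIn g k true ≤ p * cntIn g k false + d)
    {k : ℕ} (hk : k ≤ (p+1)*i + d) :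
    cntIn (glue p d n hin g h) k true < p * cntIn (glue p d n hin g h) k false + (d+1) := by
  have hcond := hg2 k hk
  rw [cntIn_glue, cntIn_glue, cnt_one_false, show k - ((p+1)*i + d) = 0 from by omega,
    show k - ((p+1)*i + d + 1) = 0 from by omega, cntIn_zero, cntIn_zero, cntIn_zero]
  simp only [Nat.add_zero]
  omega

end Main

section Bij

variable (p d n : ℕ)

def Phi (x : Σ i : Fin (n+1), Wk p d i × Wk p 0 (n - (i : ℕ))) : Wk p (d+1) n :=
  ⟨glue p d n (Nat.lt_succ_iff.mp x.1.2) x.2.1.1 x.2.2.1,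
   glue_mem p d n (Nat.lt_succ_iff.mp x.1.2) x.2.1.1 x.2.2.1
     x.2.1.2.1 x.2.1.2.2 x.2.2.2.1 x.2.2.2.2⟩

lemma Phi_inj : Function.Injective (Phi p d n) := by
  rintro ⟨I, ⟨g, hg1, hg2⟩, ⟨h, hh1, hh2⟩⟩ ⟨I', ⟨g', hg1', hg2'⟩, ⟨h', hh1', hh2'⟩⟩ heq
  have hin : (I : ℕ) ≤ n := Nat.lt_succ_iff.mp I.2
  have hin' : (I' : ℕ) ≤ n := Nat.lt_succ_iff.mp I'.2
  have heqv := congrArg Subtype.val heq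
  simp only [Phi] at heqv
  have key : ∀ (a b : ℕ) (ha : a ≤ n) (hb : b ≤ n)
      (ga : Fin ((p+1)*a + d) → Bool) (ha1 : cntIn ga ((p+1)*a + d) true = p*a + d)
      (gb : Fin ((p+1)*b + d) → Bool)
      (hgb2 : ∀ k ≤ (p+1)*b + d, cntIn gb k true ≤ p * cntIn gb k false + d)
      (hA : Fin ((p+1)*(n-a) + 0) → Bool) (hB : Fin ((p+1)*(n-b) + 0) → Bool)
      (heq2 : glue p d n ha ga hA = glue p d n hb gb hB), ¬ a < b := by
    intro a b ha hb ga ha1 gb hgb2 hA hB heq2 hab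
    have hmul : (p+1)*(a+1) ≤ (p+1)*b := Nat.mul_le_mul_left _ (by omega)
    have hmul2 : (p+1)*(a+1) = (p+1)*a + (p+1) := by ring
    have h1 := (glue_eqAt p d n ha ga hA ha1).1
    have h2 := (glue_eqAt p d n ha ga hA ha1).2
    have h3 := glue_strictBefore p d n hb gb hB hgb2
      (k := (p+1)*a + d + 1) (by omega)
    rw [heq2] at h1 h2
    rw [h1, h2] at h3
    omega
  have hii : (I : ℕ) = (I' : ℕ) := by
    by_contra hne
    rcases Nat.lt_or_ge (I : ℕ) (I' : ℕ) with hlt | hge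
    · exact key I I' hin hin' g hg1 g' hg2' h h' heqv hlt
    · exact key I' I hin' hin g' hg1' g hg2 h' h heqv.symm
        (lt_of_le_of_ne hge (fun a => hne a.symm))
  obtain rfl : I = I' := Fin.ext hii
  have hgeq : g = g' := by
    funext j
    have hj : (j : ℕ) < (p+1)*n + (d+1) := by
      have := glue_len p d n hin; have := j.2; omega
    have e1 := glue_eval_lt p d n hin g h ⟨(j : ℕ), hj⟩ j.2
    have e2 := glue_eval_lt p d n hin g' h' ⟨(j : ℕ), hj⟩ j.2
    rw [heqv] at e1
    exact e1.symm.trans e2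
  subst hgeq
  have hheq : h = h' := by
    funext j
    have hj : (p+1)*(I : ℕ) + d + 1 + (j : ℕ) < (p+1)*n + (d+1) := by
      have := glue_len p d n hin; have := j.2; omega
    have e1 := glue_eval_gt p d n hin g h ⟨(p+1)*(I : ℕ) + d + 1 + (j : ℕ), hj⟩ (by simp)
    have e2 := glue_eval_gt p d n hin g h' ⟨(p+1)*(I : ℕ) + d + 1 + (j : ℕ), hj⟩ (by simp)
    rw [heqv] at e1
    have e3 := e1.symm.trans e2
    have hfix : (⟨(p+1)*(I : ℕ) + d + 1 + (j : ℕ) - ((p+1)*(I : ℕ) + d + 1), by omega⟩ :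
        Fin ((p+1)*(n-(I : ℕ)) + 0)) = j := Fin.ext (by
      show (p+1)*(I : ℕ) + d + 1 + (j : ℕ) - ((p+1)*(I : ℕ) + d + 1) = (j : ℕ)
      omega)
    rw [hfix] at e3
    exact e3
  subst hheq
  rfl

lemma Phi_surj (hp : 0 < p) : Function.Surjective (Phi p d n) := by
  rintro ⟨f, hf1, hf2⟩
  rw [upsIn_eq] at hf1
  have hmuln : (p+1)*n = p*n + n := by ring
  have hrL : cntIn f ((p+1)*n + (d+1)) false = n := by
    have := cntIn_total f (le_rfl : (p+1)*n + (d+1) ≤ (p+1)*n + (d+1))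
    omega
  have hPL : cntIn f ((p+1)*n + (d+1)) true
      = p * cntIn f ((p+1)*n + (d+1)) false + (d+1) := by
    rw [hrL, hf1]
  have hex : ∃ k, cntIn f k true = p * cntIn f k false + (d+1) := ⟨_, hPL⟩
  classical
  set K := Nat.find hex with hKdef
  have hK : cntIn f K true = p * cntIn f K false + (d+1) := Nat.find_spec hex
  have hKmin : ∀ m, m < K → ¬ (cntIn f m true = p * cntIn f m false + (d+1)) :=
    fun m hm => Nat.find_min hex hm
  have hKle : K ≤ (p+1)*n + (d+1) := Nat.find_min' hex hPL
  have hK0 : K ≠ 0 := by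
    intro h0
    rw [h0, cntIn_zero, cntIn_zero] at hK
    omega
  have htot := cntIn_total f hKle
  obtain ⟨i, hidef⟩ : ∃ j, cntIn f K false = j := ⟨_, rfl⟩
  rw [hidef] at hK htot
  have hmuli : (p+1)*i = p*i + i := by ring
  have hKval : K = (p+1)*i + d + 1 := by omega
  have hin : i ≤ n := by
    have := cntIn_mono f hKle false
    omega
  have hlen := glue_len p d n hin
  have hKm1 : K - 1 < (p+1)*n + (d+1) := by omega
  have hstep_t := cntIn_succ f hKm1 true
  have hstep_f := cntIn_succ f hKm1 false
  rw [show K - 1 + 1 = K from by omega] at hstep_t hstep_f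
  have hnotP := hKmin (K-1) (by omega)
  have hweak := hf2 (K-1) (by omega)
  rw [upsIn_eq, rightsIn_eq] at hweak
  have hftrue : f ⟨K-1, hKm1⟩ = true := by
    cases hfv : f ⟨K-1, hKm1⟩
    · rw [hfv] at hstep_t hstep_f
      simp at hstep_t hstep_f
      have hmp : p * i = p * cntIn f (K-1) false + p := by
        rw [← hidef, hstep_f]; ring
      omega
    · rfl
  rw [hftrue] at hstep_t hstep_f
  simp at hstep_t hstep_f
  have hL1le : (p+1)*i + d ≤ (p+1)*n + (d+1) := by omega
  set g : Fin ((p+1)*i + d) → Bool := takeF f ((p+1)*i + d) hL1le with hgdef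
  have elen : (p+1)*(n-i) + 0 = (p+1)*n + (d+1) - K := by omega
  set h : Fin ((p+1)*(n-i) + 0) → Bool := (dropF f K hKle) ∘ Fin.cast elen with hhdef
  have hsub1 : K - 1 = (p+1)*i + d := by omega
  -- properties of g
  have hg1 : cntIn g ((p+1)*i + d) true = p*i + d := by
    rw [hgdef, cntIn_take f hL1le le_rfl, ← hsub1]
    omega
  have hg2 : ∀ k ≤ (p+1)*i + d, cntIn g k true ≤ p * cntIn g k false + d := by
    intro k hk
    rw [hgdef, cntIn_take f hL1le hk, cntIn_take f hL1le hk]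
    have hw := hf2 k (by omega)
    rw [upsIn_eq, rightsIn_eq] at hw
    have hnp := hKmin k (by omega)
    omega
  -- properties of h
  have hdrop_t := cntIn_drop f hKle ((p+1)*(n-i) + 0) true
  have hdrop_f := cntIn_drop f hKle ((p+1)*(n-i) + 0) false
  have hKtop : K + ((p+1)*(n-i) + 0) = (p+1)*n + (d+1) := by omega
  rw [hKtop] at hdrop_t hdrop_f
  have hcast_t : ∀ m b, cntIn h m b = cntIn (dropF f K hKle) m b := by
    intro m b
    rw [hhdef, cntIn_cast]
  have hmulni : p*i + p*(n-i) = p*n := by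
    rw [← Nat.mul_add, Nat.add_sub_cancel' hin]
  have hh1 : cntIn h ((p+1)*(n-i) + 0) true = p*(n-i) + 0 := by
    rw [hcast_t]
    omega
  have hh2 : ∀ k ≤ (p+1)*(n-i) + 0, cntIn h k true ≤ p * cntIn h k false + 0 := by
    intro m hm
    rw [hcast_t, hcast_t]
    have hd_t := cntIn_drop f hKle m true
    have hd_f := cntIn_drop f hKle m false
    have hw := hf2 (K + m) (by omega)
    rw [upsIn_eq, rightsIn_eq] at hw
    have e2 : p * (i + cntIn (dropF f K hKle) m false)
        = p*i + p * cntIn (dropF f K hKle) m false := by ring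
    rw [hd_t, hd_f, hK, hidef] at hw
    omega
  refine ⟨⟨⟨i, by omega⟩, ⟨g, hg1, hg2⟩, ⟨h, hh1, hh2⟩⟩, ?_⟩
  apply Subtype.ext
  show glue p d n hin g h = f
  funext x
  rcases lt_trichotomy (x : ℕ) ((p+1)*i + d) with hx | hx | hx
  · rw [glue_eval_lt p d n hin g h x hx]
    rw [hgdef]
    show f _ = f x
    exact congrArg f (Fin.ext rfl)
  · rw [glue_eval_eq p d n hin g h x hx]
    have : x = ⟨K-1, hKm1⟩ := Fin.ext (by show (x:ℕ) = K - 1; omega)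
    rw [this, hftrue]
  · rw [glue_eval_gt p d n hin g h x (by omega)]
    rw [hhdef]
    show f _ = f x
    apply congrArg f
    apply Fin.ext
    show K + ((x : ℕ) - ((p+1)*i + d + 1)) = (x : ℕ)
    omega

end Bij

instance WkFinite (p d n : ℕ) : Finite (Wk p d n) := by unfold Wk; infer_instance

theorem weakCount_succ_eq_sum (p : ℕ) (hp : 0 < p) (d n : ℕ) :
    weakCount p (d + 1) n = ∑ i ∈ Finset.range (n + 1), weakCount p d i * weakCount p 0 (n - i) := by
  classical
  have hbij : Function.Bijective (Phi p d n) := ⟨Phi_inj p d n, Phi_surj p d n hp⟩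
  have e1 : weakCount p (d+1) n
      = Nat.card (Σ i : Fin (n+1), Wk p d (i : ℕ) × Wk p 0 (n - (i : ℕ))) := by
    rw [weakCount_eq]
    exact (Nat.card_congr (Equiv.ofBijective _ hbij)).symm
  rw [e1]
  letI : ∀ i : Fin (n+1), Fintype (Wk p d (i : ℕ)) := fun i => Fintype.ofFinite _
  letI : ∀ i : Fin (n+1), Fintype (Wk p 0 (n - (i : ℕ))) := fun i => Fintype.ofFinite _
  have e2 : ∀ i : Fin (n+1), Fintype.card (Wk p d (i : ℕ) × Wk p 0 (n - (i : ℕ)))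
      = weakCount p d (i : ℕ) * weakCount p 0 (n - (i : ℕ)) := by
    intro i
    rw [Fintype.card_prod, weakCount_eq, weakCount_eq, Nat.card_eq_fintype_card,
      Nat.card_eq_fintype_card]
  rw [Nat.card_eq_fintype_card, Fintype.card_sigma]
  calc ∑ i : Fin (n+1), Fintype.card (Wk p d (i : ℕ) × Wk p 0 (n - (i : ℕ)))
      = ∑ i : Fin (n+1), weakCount p d (i : ℕ) * weakCount p 0 (n - (i : ℕ)) :=
        Finset.sum_congr rfl (fun i _ => e2 i)
    _ = ∑ i ∈ Finset.range (n+1), weakCount p d i * weakCount p 0 (n - i) :=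
        Fin.sum_univ_eq_sum_range (fun j => weakCount p d j * weakCount p 0 (n - j)) (n+1)
end

section
/- Let β > 0 and p, d nonnegative integers with p ≥ 1. The probability Φ_β(p,d) that the β-biased monotonic random walk starting at the origin crosses the line y = px + d satisfies Φ_β(p,d) = Φ_β(p,0)^{d+1}. -/
/-- `crossProb β p d` is the probability `Φ_β(p,d)` that the `β`-biased monotonic random
walk starting at the origin (moving right with probability `1/(β+1)` and up with
probability `β/(β+1)`) crosses the line `y = p*x + d`, i.e. meets a lattice point
`(n, p*n + d + 1)`.  Decomposing by the first lattice point above the line, this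
probability equals `∑ₙ S(n,d) β^{pn+d+1}/(β+1)^{pn+n+d+1}`, where `S(n,d) = weakCount p d n`. -/
noncomputable def crossProb (β : ℝ) (p d : ℕ) : ℝ :=
  ∑' n : ℕ, (weakCount p d n : ℝ) * β ^ (p * n + d + 1) / (β + 1) ^ ((p + 1) * n + d + 1)

/-- `meetProb β p d` is the probability `Ψ_β(p,d)` that the `β`-biased monotonic random
walk starting at the origin meets a lattice point on the line `y = p*x + d` after
departure.  For `d > 0`, decomposing by the first such lattice point `(n, p*n+d)` (reached
by a path strictly below the line except at its endpoint), this probability equals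
`∑ₙ T(n,d) β^{pn+d}/(β+1)^{pn+n+d}`; for `d = 0`, by the reflection symmetry of first
meeting points it equals `2 ∑ₙ N(p,n) β^{pn}/(β+1)^{pn+n}`. -/
noncomputable def meetProb (β : ℝ) (p d : ℕ) : ℝ :=
  if d = 0 then 2 * ∑' n : ℕ, (strictCount p 0 n : ℝ) * β ^ (p * n) / (β + 1) ^ ((p + 1) * n)
  else ∑' n : ℕ, (strictCount p d n : ℝ) * β ^ (p * n + d) / (β + 1) ^ ((p + 1) * n + d)

namespace WalkAux

lemma count_zero {L : ℕ} (f : Fin L → Bool) (b : Bool) :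
    (Finset.univ.filter (fun i : Fin L => (i : ℕ) < 0 ∧ f i = b)).card = 0 := by
  simp

lemma count_succ {L : ℕ} (f : Fin L → Bool) (b : Bool) (k : ℕ) (h : k < L) :
    (Finset.univ.filter (fun i : Fin L => (i : ℕ) < k + 1 ∧ f i = b)).card
      = (Finset.univ.filter (fun i : Fin L => (i : ℕ) < k ∧ f i = b)).card
        + (if f ⟨k, h⟩ = b then 1 else 0) := by
  rw [Finset.card_filter, Finset.card_filter]
  have key : ∀ i : Fin L,
      (if (i : ℕ) < k + 1 ∧ f i = b then 1 else 0)
        = (if (i : ℕ) < k ∧ f i = b then 1 else 0) + (if ((i : ℕ) = k ∧ f i = b) then 1 else 0) := by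
    intro i
    by_cases h1 : (i : ℕ) < k
    · have : ¬ ((i : ℕ) = k) := by omega
      simp [h1, this, Nat.lt_succ_of_lt h1]
    · by_cases h2 : (i : ℕ) = k
      · simp [h1, h2, Nat.lt_succ_iff]
      · have : ¬ ((i : ℕ) < k + 1) := by omega
        simp [h1, h2, this]
  rw [Finset.sum_congr rfl (fun i _ => key i), Finset.sum_add_distrib]
  congr 1
  rw [Finset.sum_eq_single ⟨k, h⟩]
  · simp
  · intro i _ hne
    have : ¬ ((i : ℕ) = k) := by
      intro hh; apply hne; exact Fin.ext hh
    simp [this]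
  · simp

lemma count_succ_ge {L : ℕ} (f : Fin L → Bool) (b : Bool) (k : ℕ) (h : L ≤ k) :
    (Finset.univ.filter (fun i : Fin L => (i : ℕ) < k + 1 ∧ f i = b)).card
      = (Finset.univ.filter (fun i : Fin L => (i : ℕ) < k ∧ f i = b)).card := by
  congr 1
  apply Finset.filter_congr
  intro i _
  have : (i : ℕ) < L := i.isLt
  constructor
  · rintro ⟨_, hb⟩; exact ⟨by omega, hb⟩
  · rintro ⟨_, hb⟩; exact ⟨by omega, hb⟩

lemma upsIn_zero {L : ℕ} (f : Fin L → Bool) : upsIn f 0 = 0 := count_zero f true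
lemma rightsIn_zero {L : ℕ} (f : Fin L → Bool) : rightsIn f 0 = 0 := count_zero f false

lemma upsIn_succ {L : ℕ} (f : Fin L → Bool) (k : ℕ) (h : k < L) :
    upsIn f (k + 1) = upsIn f k + (if f ⟨k, h⟩ = true then 1 else 0) := count_succ f true k h

lemma rightsIn_succ {L : ℕ} (f : Fin L → Bool) (k : ℕ) (h : k < L) :
    rightsIn f (k + 1) = rightsIn f k + (if f ⟨k, h⟩ = false then 1 else 0) := count_succ f false k h

lemma upsIn_succ_ge {L : ℕ} (f : Fin L → Bool) (k : ℕ) (h : L ≤ k) :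
    upsIn f (k + 1) = upsIn f k := count_succ_ge f true k h

lemma rightsIn_succ_ge {L : ℕ} (f : Fin L → Bool) (k : ℕ) (h : L ≤ k) :
    rightsIn f (k + 1) = rightsIn f k := count_succ_ge f false k h

lemma upsIn_add_rightsIn {L : ℕ} (f : Fin L → Bool) (k : ℕ) :
    upsIn f k + rightsIn f k = min k L := by
  induction k with
  | zero => simp [upsIn_zero, rightsIn_zero]
  | succ k ih =>
    rcases lt_or_ge k L with h | h
    · rw [upsIn_succ f k h, rightsIn_succ f k h]
      cases hfk : f ⟨k, h⟩ <;> simp [hfk] <;> omega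
    · rw [upsIn_succ_ge f k h, rightsIn_succ_ge f k h]
      omega

lemma upsIn_mono {L : ℕ} (f : Fin L → Bool) : Monotone (upsIn f) := by
  apply monotone_nat_of_le_succ
  intro k
  rcases lt_or_ge k L with h | h
  · rw [upsIn_succ f k h]; omega
  · rw [upsIn_succ_ge f k h]

lemma upsIn_congr {L L' : ℕ} (f : Fin L → Bool) (g : Fin L' → Bool) (k : ℕ)
    (hk : k ≤ L) (hk' : k ≤ L')
    (hfg : ∀ i (h1 : i < L) (h2 : i < L'), i < k → f ⟨i, h1⟩ = g ⟨i, h2⟩) :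
    upsIn f k = upsIn g k := by
  induction k with
  | zero => rw [upsIn_zero, upsIn_zero]
  | succ k ih =>
    have h1 : k < L := by omega
    have h2 : k < L' := by omega
    rw [upsIn_succ f k h1, upsIn_succ g k h2,
      ih (by omega) (by omega) (fun i hi1 hi2 hik => hfg i hi1 hi2 (by omega)),
      hfg k h1 h2 (by omega)]

lemma upsIn_shift {L L' : ℕ} (F : Fin L → Bool) (g : Fin L' → Bool) (a k : ℕ)
    (h : a + k ≤ L) (hk : k ≤ L')
    (hfg : ∀ j (h1 : a + j < L) (h2 : j < L'), j < k → g ⟨j, h2⟩ = F ⟨a + j, h1⟩) :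
    upsIn F (a + k) = upsIn F a + upsIn g k := by
  induction k with
  | zero => rw [Nat.add_zero, upsIn_zero, Nat.add_zero]
  | succ k ih =>
    have h1 : a + k < L := by omega
    have h2 : k < L' := by omega
    have : a + (k + 1) = (a + k) + 1 := rfl
    rw [this, upsIn_succ F (a + k) h1, upsIn_succ g k h2,
      ih (by omega) (by omega) (fun j hj1 hj2 hjk => hfg j hj1 hj2 (by omega)),
      hfg k h1 h2 (by omega)]
    omega

end WalkAux

namespace WalkAux

/-- The weak-below-line condition bundled. -/
def Cond (p d n : ℕ) (f : Fin ((p + 1) * n + d) → Bool) : Prop :=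
  upsIn f ((p + 1) * n + d) = p * n + d ∧
    ∀ k ≤ (p + 1) * n + d, upsIn f k ≤ p * rightsIn f k + d

/-- Concatenation: a path below `y=px` to `(m,pm)`, an up-step, and a path below
`y=px+d` (shifted) to the end. -/
def joinF (p m q n d : ℕ) (h : m + q = n)
    (f1 : Fin ((p + 1) * m + 0) → Bool) (g : Fin ((p + 1) * q + d) → Bool) :
    Fin ((p + 1) * n + (d + 1)) → Bool := fun i =>
  if h1 : (i : ℕ) < (p + 1) * m then f1 ⟨i, by omega⟩
  else if h2 : (i : ℕ) = (p + 1) * m then true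
  else g ⟨(i : ℕ) - ((p + 1) * m + 1), by
    have hi := i.isLt
    have hn : (p + 1) * n = (p + 1) * m + (p + 1) * q := by rw [← h]; ring
    omega⟩

section Join

variable (p m q n d : ℕ) (h : m + q = n)
  (f1 : Fin ((p + 1) * m + 0) → Bool) (g : Fin ((p + 1) * q + d) → Bool)

lemma hL_join (h' : m + q = n) :
    (p + 1) * n + (d + 1) = ((p + 1) * m + 1) + ((p + 1) * q + d) := by
  subst h'; ring

lemma join_ups_low (k : ℕ) (hk : k ≤ (p + 1) * m) :
    upsIn (joinF p m q n d h f1 g) k = upsIn f1 k := by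
  have hL := hL_join p m q n d h
  apply upsIn_congr _ _ k (by omega) (by omega)
  intro i hi1 hi2 hik
  simp only [joinF]
  rw [dif_pos (by omega)]

lemma join_ups_at :
    upsIn (joinF p m q n d h f1 g) ((p + 1) * m + 1)
      = upsIn (joinF p m q n d h f1 g) ((p + 1) * m) + 1 := by
  have hL := hL_join p m q n d h
  rw [upsIn_succ _ ((p + 1) * m) (by omega)]
  have : joinF p m q n d h f1 g ⟨(p + 1) * m, by omega⟩ = true := by
    simp only [joinF]
    rw [dif_neg (by omega)]
    simp
  rw [this]
  simp

lemma join_ups_high (j : ℕ) (hj : j ≤ (p + 1) * q + d) :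
    upsIn (joinF p m q n d h f1 g) ((p + 1) * m + 1 + j)
      = upsIn (joinF p m q n d h f1 g) ((p + 1) * m + 1) + upsIn g j := by
  have hL := hL_join p m q n d h
  apply upsIn_shift _ _ ((p + 1) * m + 1) j (by omega) hj
  intro j' hj1 hj2 hjk
  simp only [joinF]
  rw [dif_neg (by omega), dif_neg (by omega)]
  congr 1
  apply Fin.ext
  simp

lemma join_cond (hf1 : Cond p 0 m f1) (hg : Cond p d q g) :
    Cond p (d + 1) n (joinF p m q n d h f1 g) := by
  have hL := hL_join p m q n d h
  have hmm : (p + 1) * m = p * m + m := by ring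
  have hqq : (p + 1) * q = p * q + q := by ring
  have hnn : (p + 1) * n = p * n + n := by ring
  have hmqn : m + q = n := h
  obtain ⟨hf1t, hf1w⟩ := hf1
  obtain ⟨hgt, hgw⟩ := hg
  have ha : upsIn (joinF p m q n d h f1 g) ((p + 1) * m) = p * m := by
    rw [join_ups_low p m q n d h f1 g _ le_rfl]
    simpa using hf1t
  have ha1 : upsIn (joinF p m q n d h f1 g) ((p + 1) * m + 1) = p * m + 1 := by
    rw [join_ups_at, ha]
  constructor
  · have e1 := join_ups_high p m q n d h f1 g ((p + 1) * q + d) le_rfl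
    have e0 := congrArg (upsIn (joinF p m q n d h f1 g)) hL
    omega
  · intro k hk
    rcases le_or_gt k ((p + 1) * m) with hkle | hkgt
    · have hu : upsIn (joinF p m q n d h f1 g) k = upsIn f1 k :=
        join_ups_low p m q n d h f1 g k hkle
      have h1 := upsIn_add_rightsIn (joinF p m q n d h f1 g) k
      have h2 := upsIn_add_rightsIn f1 k
      have hw := hf1w k (by omega)
      have hm1 : min k ((p + 1) * n + (d + 1)) = k := by omega
      have hm2 : min k ((p + 1) * m + 0) = k := by omega
      have hr : rightsIn (joinF p m q n d h f1 g) k = rightsIn f1 k := by omega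
      rw [hu, hr]
      omega
    · set j := k - ((p + 1) * m + 1) with hjdef
      have hk' : k = (p + 1) * m + 1 + j := by omega
      have hjle : j ≤ (p + 1) * q + d := by omega
      have hu : upsIn (joinF p m q n d h f1 g) k = p * m + 1 + upsIn g j := by
        rw [hk', join_ups_high p m q n d h f1 g j hjle, ha1]
      have h1 := upsIn_add_rightsIn (joinF p m q n d h f1 g) k
      have h2 := upsIn_add_rightsIn g j
      have hw := hgw j hjle
      have hr : rightsIn (joinF p m q n d h f1 g) k = m + rightsIn g j := by omega
      rw [hu, hr, Nat.mul_add]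
      omega

lemma joinF_apply_low (i : Fin ((p + 1) * m + 0))
    (hidx : (i : ℕ) < (p + 1) * n + (d + 1)) :
    joinF p m q n d h f1 g ⟨(i : ℕ), hidx⟩ = f1 i := by
  simp only [joinF]
  rw [dif_pos (show ((i : ℕ)) < (p + 1) * m from by have := i.isLt; omega)]

lemma joinF_apply_high (j : Fin ((p + 1) * q + d))
    (hidx : (p + 1) * m + 1 + (j : ℕ) < (p + 1) * n + (d + 1)) :
    joinF p m q n d h f1 g ⟨(p + 1) * m + 1 + (j : ℕ), hidx⟩ = g j := by
  simp only [joinF]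
  rw [dif_neg (by omega), dif_neg (by omega)]
  congr 1
  apply Fin.ext
  show (p + 1) * m + 1 + (j : ℕ) - ((p + 1) * m + 1) = (j : ℕ)
  omega

lemma join_no_exceed (hf1 : Cond p 0 m f1) (k : ℕ) (hk : k ≤ (p + 1) * m) :
    upsIn (joinF p m q n d h f1 g) k ≤ p * rightsIn (joinF p m q n d h f1 g) k := by
  have hL := hL_join p m q n d h
  have hu : upsIn (joinF p m q n d h f1 g) k = upsIn f1 k :=
    join_ups_low p m q n d h f1 g k hk
  have h1 := upsIn_add_rightsIn (joinF p m q n d h f1 g) k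
  have h2 := upsIn_add_rightsIn f1 k
  have hw := hf1.2 k (by omega)
  have hm1 : min k ((p + 1) * n + (d + 1)) = k := by omega
  have hm2 : min k ((p + 1) * m + 0) = k := by omega
  have hr : rightsIn (joinF p m q n d h f1 g) k = rightsIn f1 k := by omega
  rw [hu, hr]
  omega

end Join

lemma rightsIn_mono {L : ℕ} (f : Fin L → Bool) : Monotone (rightsIn f) := by
  apply monotone_nat_of_le_succ
  intro k
  rcases lt_or_ge k L with h | h
  · rw [rightsIn_succ f k h]; omega
  · rw [rightsIn_succ_ge f k h]

section Split

variable (p d n : ℕ) (F : Fin ((p + 1) * n + (d + 1)) → Bool)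

lemma exists_split (hF : Cond p (d + 1) n F) :
    ∃ (m q : ℕ) (h : m + q = n) (f1 : Fin ((p + 1) * m + 0) → Bool)
      (g : Fin ((p + 1) * q + d) → Bool),
      Cond p 0 m f1 ∧ Cond p d q g ∧ joinF p m q n d h f1 g = F := by
  classical
  obtain ⟨hFt, hFw⟩ := hF
  have hnn : (p + 1) * n = p * n + n := by ring
  have hrL : rightsIn F ((p + 1) * n + (d + 1)) = n := by
    have := upsIn_add_rightsIn F ((p + 1) * n + (d + 1))
    omega
  have hex : ∃ k, p * rightsIn F k < upsIn F k := ⟨(p + 1) * n + (d + 1), by rw [hrL, hFt]; omega⟩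
  set k0 := Nat.find hex with hk0def
  have hk0 : p * rightsIn F k0 < upsIn F k0 := Nat.find_spec hex
  have hmin : ∀ k < k0, ¬ p * rightsIn F k < upsIn F k := fun k hk => Nat.find_min hex hk
  have hk0L : k0 ≤ (p + 1) * n + (d + 1) := Nat.find_le (by rw [hrL, hFt]; omega)
  have hk0pos : 0 < k0 := by
    rcases Nat.eq_zero_or_pos k0 with h0 | h0
    · exfalso
      rw [h0, upsIn_zero] at hk0
      omega
    · exact h0
  have hk1L : k0 - 1 < (p + 1) * n + (d + 1) := by omega
  have hk01 : k0 = (k0 - 1) + 1 := by omega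
  have hstepu : upsIn F ((k0 - 1) + 1) = upsIn F (k0 - 1) + (if F ⟨k0 - 1, hk1L⟩ = true then 1 else 0) :=
    upsIn_succ F (k0 - 1) hk1L
  have hstepr : rightsIn F ((k0 - 1) + 1)
      = rightsIn F (k0 - 1) + (if F ⟨k0 - 1, hk1L⟩ = false then 1 else 0) :=
    rightsIn_succ F (k0 - 1) hk1L
  have hcu : upsIn F k0 = upsIn F ((k0 - 1) + 1) := congrArg (upsIn F) hk01
  have hcr : rightsIn F k0 = rightsIn F ((k0 - 1) + 1) := congrArg (rightsIn F) hk01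
  have hnot1 : ¬ p * rightsIn F (k0 - 1) < upsIn F (k0 - 1) := hmin (k0 - 1) (by omega)
  have hup : F ⟨k0 - 1, hk1L⟩ = true := by
    cases hb : F ⟨k0 - 1, hk1L⟩
    · exfalso
      rw [hb] at hstepu hstepr
      simp at hstepu hstepr
      have : p * rightsIn F k0 = p * rightsIn F (k0 - 1) + p := by
        rw [hcr, hstepr, Nat.mul_add, Nat.mul_one]
      omega
    · rfl
  rw [hup] at hstepu hstepr
  simp at hstepu hstepr
  have hpr : p * rightsIn F k0 = p * rightsIn F (k0 - 1) := by rw [hcr, hstepr]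
  have hexact : upsIn F k0 = p * rightsIn F k0 + 1 := by omega
  have hmn : rightsIn F k0 ≤ n :=
    le_trans (rightsIn_mono F hk0L) (le_of_eq hrL)
  set m := rightsIn F k0 with hmdef
  have hmm : (p + 1) * m = p * m + m := by ring
  have hk0eq : k0 = (p + 1) * m + 1 := by
    have h1 := upsIn_add_rightsIn F k0
    omega
  set q := n - m with hqdef
  have h : m + q = n := by omega
  have hqq : (p + 1) * q = p * q + q := by ring
  have hL : (p + 1) * n + (d + 1) = ((p + 1) * m + 1) + ((p + 1) * q + d) := hL_join p m q n d h
  have hua1 : upsIn F ((p + 1) * m + 1) = p * m + 1 := by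
    have e := congrArg (upsIn F) hk0eq
    omega
  have hu1 : upsIn F ((p + 1) * m) = p * m := by
    have e1 : (p + 1) * m = k0 - 1 := by omega
    have e := congrArg (upsIn F) e1
    omega
  refine ⟨m, q, h, fun i => F ⟨i, by omega⟩, fun j => F ⟨(p + 1) * m + 1 + j, by omega⟩,
    ⟨?_, ?_⟩, ⟨?_, ?_⟩, ?_⟩
  · -- f1 total
    show upsIn (fun i : Fin ((p + 1) * m + 0) => F ⟨i, by omega⟩) ((p + 1) * m) = p * m
    have hcongr : upsIn (fun i : Fin ((p + 1) * m + 0) => F ⟨i, by omega⟩) ((p + 1) * m)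
        = upsIn F ((p + 1) * m) := by
      apply upsIn_congr _ _ _ (by omega) (by omega)
      intro i h1 h2 hik
      rfl
    rw [hcongr]
    omega
  · -- f1 weak
    intro k hk
    have hcongr : upsIn (fun i : Fin ((p + 1) * m + 0) => F ⟨i, by omega⟩) k = upsIn F k := by
      apply upsIn_congr _ _ _ hk (by omega)
      intro i h1 h2 hik
      rfl
    have h1 := upsIn_add_rightsIn (fun i : Fin ((p + 1) * m + 0) => F ⟨i, by omega⟩) k
    have h2 := upsIn_add_rightsIn F k
    have hne := hmin k (by omega)
    have hr : rightsIn (fun i : Fin ((p + 1) * m + 0) => F ⟨i, by omega⟩) k = rightsIn F k := by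
      omega
    rw [hcongr, hr]
    omega
  · -- g total
    have hshift := upsIn_shift F
      (fun j : Fin ((p + 1) * q + d) => F ⟨(p + 1) * m + 1 + j, by omega⟩)
      ((p + 1) * m + 1) ((p + 1) * q + d) (by omega) le_rfl (fun j h1 h2 hjk => rfl)
    have he := congrArg (upsIn F) hL
    omega
  · -- g weak
    intro j hj
    have hshift := upsIn_shift F
      (fun j : Fin ((p + 1) * q + d) => F ⟨(p + 1) * m + 1 + j, by omega⟩)
      ((p + 1) * m + 1) j (by omega) hj (fun j' h1 h2 hjk => rfl)
    have hw := hFw ((p + 1) * m + 1 + j) (by omega)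
    have h1 := upsIn_add_rightsIn F ((p + 1) * m + 1 + j)
    have h2 := upsIn_add_rightsIn
      (fun j : Fin ((p + 1) * q + d) => F ⟨(p + 1) * m + 1 + j, by omega⟩) j
    have hrr : rightsIn F ((p + 1) * m + 1 + j)
        = m + rightsIn (fun j : Fin ((p + 1) * q + d) => F ⟨(p + 1) * m + 1 + j, by omega⟩) j := by
      omega
    rw [hrr, Nat.mul_add] at hw
    omega
  · -- join equals F
    funext i
    simp only [joinF]
    by_cases h1 : (i : ℕ) < (p + 1) * m
    · rw [dif_pos h1]
    · rw [dif_neg h1]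
      by_cases h2 : (i : ℕ) = (p + 1) * m
      · rw [dif_pos h2]
        have : i = ⟨k0 - 1, hk1L⟩ := by
          apply Fin.ext
          show (i : ℕ) = k0 - 1
          omega
        rw [this, hup]
      · rw [dif_neg h2]
        refine congrArg F (Fin.ext ?_)
        show (p + 1) * m + 1 + ((i : ℕ) - ((p + 1) * m + 1)) = (i : ℕ)
        omega

end Split

section Inj

variable (p d n : ℕ)

lemma join_ne (m q m' q' : ℕ) (h : m + q = n) (h' : m' + q' = n)
    (f1 : Fin ((p + 1) * m + 0) → Bool) (g : Fin ((p + 1) * q + d) → Bool)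
    (f1' : Fin ((p + 1) * m' + 0) → Bool) (g' : Fin ((p + 1) * q' + d) → Bool)
    (hf1 : Cond p 0 m f1) (hf1' : Cond p 0 m' f1')
    (hlt : m < m')
    (hJ : joinF p m q n d h f1 g = joinF p m' q' n d h' f1' g') : False := by
  have hL := hL_join p m q n d h
  have hmm : (p + 1) * m = p * m + m := by ring
  have ha : upsIn (joinF p m q n d h f1 g) ((p + 1) * m) = p * m := by
    rw [join_ups_low p m q n d h f1 g _ le_rfl]
    simpa using hf1.1
  have ha1 : upsIn (joinF p m q n d h f1 g) ((p + 1) * m + 1) = p * m + 1 := by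
    rw [join_ups_at, ha]
  have hk : (p + 1) * m + 1 ≤ (p + 1) * m' := by
    have h1 : (p + 1) * (m + 1) ≤ (p + 1) * m' := Nat.mul_le_mul_left _ (by omega)
    have h2 : (p + 1) * (m + 1) = (p + 1) * m + (p + 1) := by ring
    omega
  have hne := join_no_exceed p m' q' n d h' f1' g' hf1' ((p + 1) * m + 1) hk
  rw [← hJ, ha1] at hne
  have h1 := upsIn_add_rightsIn (joinF p m q n d h f1 g) ((p + 1) * m + 1)
  have hr : rightsIn (joinF p m q n d h f1 g) ((p + 1) * m + 1) = m := by omega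
  rw [hr] at hne
  omega

end Inj

lemma weakCount_succ (p d n : ℕ) :
    weakCount p (d + 1) n
      = ∑ x ∈ Finset.HasAntidiagonal.antidiagonal n, weakCount p 0 x.1 * weakCount p d x.2 := by
  classical
  have hΦ : ∀ z : (Σ x : Finset.HasAntidiagonal.antidiagonal n,
      ({f : Fin ((p + 1) * x.1.1 + 0) → Bool // Cond p 0 x.1.1 f}
        × {g : Fin ((p + 1) * x.1.2 + d) → Bool // Cond p d x.1.2 g})),
      Cond p (d + 1) n (joinF p z.1.1.1 z.1.1.2 n d
        (Finset.HasAntidiagonal.mem_antidiagonal.mp z.1.2) z.2.1.1 z.2.2.1) := by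
    rintro ⟨⟨⟨m, q⟩, hmq⟩, ⟨f1, hf1⟩, ⟨g, hg⟩⟩
    exact join_cond p m q n d _ f1 g hf1 hg
  set Φ : (Σ x : Finset.HasAntidiagonal.antidiagonal n,
      ({f : Fin ((p + 1) * x.1.1 + 0) → Bool // Cond p 0 x.1.1 f}
        × {g : Fin ((p + 1) * x.1.2 + d) → Bool // Cond p d x.1.2 g}))
      → {F : Fin ((p + 1) * n + (d + 1)) → Bool // Cond p (d + 1) n F} :=
    fun z => ⟨_, hΦ z⟩ with hΦdef
  have hinj : Function.Injective Φ := by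
    rintro ⟨⟨⟨m, q⟩, hmq⟩, ⟨f1, hf1⟩, ⟨g, hg⟩⟩ ⟨⟨⟨m', q'⟩, hmq'⟩, ⟨f1', hf1'⟩, ⟨g', hg'⟩⟩ hab
    have hJ : joinF p m q n d (Finset.HasAntidiagonal.mem_antidiagonal.mp hmq) f1 g
        = joinF p m' q' n d (Finset.HasAntidiagonal.mem_antidiagonal.mp hmq') f1' g' :=
      congrArg Subtype.val hab
    have hm : m = m' := by
      rcases lt_trichotomy m m' with hlt | heq | hgt
      · exact absurd (join_ne p d n m q m' q' _ _ f1 g f1' g' hf1 hf1' hlt hJ) (by simp)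
      · exact heq
      · exact absurd (join_ne p d n m' q' m q _ _ f1' g' f1 g hf1' hf1 hgt hJ.symm) (by simp)
    subst hm
    have hq : q = q' := by
      have e1 := Finset.HasAntidiagonal.mem_antidiagonal.mp hmq
      have e2 := Finset.HasAntidiagonal.mem_antidiagonal.mp hmq'
      omega
    subst hq
    have hL := hL_join p m q n d (Finset.HasAntidiagonal.mem_antidiagonal.mp hmq)
    have ef : f1 = f1' := by
      funext i
      have hidx : (i : ℕ) < (p + 1) * n + (d + 1) := by
        have hi : (i : ℕ) < (p + 1) * m + 0 := i.isLt
        omega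
      have := congrFun hJ ⟨(i : ℕ), hidx⟩
      rwa [joinF_apply_low, joinF_apply_low] at this
    have eg : g = g' := by
      funext j
      have hidx : (p + 1) * m + 1 + (j : ℕ) < (p + 1) * n + (d + 1) := by
        have hj : (j : ℕ) < (p + 1) * q + d := j.isLt
        omega
      have := congrFun hJ ⟨(p + 1) * m + 1 + (j : ℕ), hidx⟩
      rwa [joinF_apply_high, joinF_apply_high] at this
    subst ef
    subst eg
    rfl
  have hsurj : Function.Surjective Φ := by
    rintro ⟨F, hF⟩
    obtain ⟨m, q, h, f1, g, hf1, hg, hJeq⟩ := exists_split p d n F hF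
    exact ⟨⟨⟨(m, q), Finset.HasAntidiagonal.mem_antidiagonal.mpr h⟩, ⟨f1, hf1⟩, ⟨g, hg⟩⟩, Subtype.ext hJeq⟩
  have hcard : weakCount p (d + 1) n
      = Nat.card (Σ x : Finset.HasAntidiagonal.antidiagonal n,
        ({f : Fin ((p + 1) * x.1.1 + 0) → Bool // Cond p 0 x.1.1 f}
          × {g : Fin ((p + 1) * x.1.2 + d) → Bool // Cond p d x.1.2 g})) :=
    (Nat.card_congr (Equiv.ofBijective Φ ⟨hinj, hsurj⟩)).symm
  rw [hcard, Nat.card_eq_fintype_card, Fintype.card_sigma]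
  rw [← Finset.sum_coe_sort (Finset.HasAntidiagonal.antidiagonal n)
    (fun x => weakCount p 0 x.1 * weakCount p d x.2)]
  congr 1
  funext x
  rw [Fintype.card_prod]
  congr 1
  · rw [← Nat.card_eq_fintype_card]; rfl
  · rw [← Nat.card_eq_fintype_card]; rfl

open ENNReal in
lemma ennTerm_toReal (β : ℝ) (hβ : 0 ≤ β) (p d n : ℕ) :
    ((weakCount p d n : ℝ≥0∞) * (ENNReal.ofReal β) ^ (p * n + d + 1)
      * ((ENNReal.ofReal (β + 1))⁻¹) ^ ((p + 1) * n + d + 1)).toReal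
    = (weakCount p d n : ℝ) * β ^ (p * n + d + 1) / (β + 1) ^ ((p + 1) * n + d + 1) := by
  rw [ENNReal.toReal_mul, ENNReal.toReal_mul, ENNReal.toReal_pow, ENNReal.toReal_pow,
    ENNReal.toReal_inv, ENNReal.toReal_ofReal hβ, ENNReal.toReal_ofReal (by linarith),
    ENNReal.toReal_natCast]
  rw [div_eq_mul_inv, ← inv_pow, mul_assoc]

open ENNReal in
lemma ennTerm_ne_top (β : ℝ) (hβ : 0 ≤ β) (p d n : ℕ) :
    (weakCount p d n : ℝ≥0∞) * (ENNReal.ofReal β) ^ (p * n + d + 1)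
      * ((ENNReal.ofReal (β + 1))⁻¹) ^ ((p + 1) * n + d + 1) ≠ ∞ := by
  apply ENNReal.mul_ne_top
  apply ENNReal.mul_ne_top
  · exact ENNReal.natCast_ne_top _
  · exact ENNReal.pow_ne_top ENNReal.ofReal_ne_top
  · apply ENNReal.pow_ne_top
    rw [Ne, ENNReal.inv_eq_top]
    exact (ENNReal.ofReal_pos.mpr (by linarith)).ne'

open ENNReal in
noncomputable def ennA (β : ℝ) (p d : ℕ) : ℝ≥0∞ :=
  ∑' n : ℕ, (weakCount p d n : ℝ≥0∞) * (ENNReal.ofReal β) ^ (p * n + d + 1)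
      * ((ENNReal.ofReal (β + 1))⁻¹) ^ ((p + 1) * n + d + 1)

open ENNReal in
lemma crossProb_eq_ennA (β : ℝ) (hβ : 0 ≤ β) (p d : ℕ) :
    crossProb β p d = (ennA β p d).toReal := by
  rw [ennA, ENNReal.tsum_toReal_eq (fun n => ennTerm_ne_top β hβ p d n), crossProb]
  exact tsum_congr fun n => (ennTerm_toReal β hβ p d n).symm

open ENNReal in
lemma ennA_succ (β : ℝ) (p d : ℕ) : ennA β p (d + 1) = ennA β p 0 * ennA β p d := by
  set b := ENNReal.ofReal β with hb
  set t := (ENNReal.ofReal (β + 1))⁻¹ with ht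
  have key : ennA β p 0 * ennA β p d
      = ∑' n : ℕ, ∑ x ∈ Finset.HasAntidiagonal.antidiagonal n,
          ((weakCount p 0 x.1 : ℝ≥0∞) * b ^ (p * x.1 + 0 + 1) * t ^ ((p + 1) * x.1 + 0 + 1))
            * ((weakCount p d x.2 : ℝ≥0∞) * b ^ (p * x.2 + d + 1)
              * t ^ ((p + 1) * x.2 + d + 1)) := by
    calc ennA β p 0 * ennA β p d
        = ∑' m : ℕ, ((weakCount p 0 m : ℝ≥0∞) * b ^ (p * m + 0 + 1) * t ^ ((p + 1) * m + 0 + 1))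
            * ennA β p d := ENNReal.tsum_mul_right.symm
      _ = ∑' (m : ℕ) (k : ℕ),
            ((weakCount p 0 m : ℝ≥0∞) * b ^ (p * m + 0 + 1) * t ^ ((p + 1) * m + 0 + 1))
            * ((weakCount p d k : ℝ≥0∞) * b ^ (p * k + d + 1) * t ^ ((p + 1) * k + d + 1)) :=
          tsum_congr fun m => ENNReal.tsum_mul_left.symm
      _ = ∑' x : ℕ × ℕ,
            ((weakCount p 0 x.1 : ℝ≥0∞) * b ^ (p * x.1 + 0 + 1) * t ^ ((p + 1) * x.1 + 0 + 1))
            * ((weakCount p d x.2 : ℝ≥0∞) * b ^ (p * x.2 + d + 1)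
              * t ^ ((p + 1) * x.2 + d + 1)) := ENNReal.tsum_prod.symm
      _ = ∑' y : (Σ n : ℕ, Finset.HasAntidiagonal.antidiagonal n),
            ((weakCount p 0 (Finset.HasAntidiagonal.sigmaAntidiagonalEquivProd y).1 : ℝ≥0∞)
              * b ^ (p * (Finset.HasAntidiagonal.sigmaAntidiagonalEquivProd y).1 + 0 + 1)
              * t ^ ((p + 1) * (Finset.HasAntidiagonal.sigmaAntidiagonalEquivProd y).1 + 0 + 1))
            * ((weakCount p d (Finset.HasAntidiagonal.sigmaAntidiagonalEquivProd y).2 : ℝ≥0∞)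
              * b ^ (p * (Finset.HasAntidiagonal.sigmaAntidiagonalEquivProd y).2 + d + 1)
              * t ^ ((p + 1) * (Finset.HasAntidiagonal.sigmaAntidiagonalEquivProd y).2 + d + 1)) :=
          (Equiv.tsum_eq Finset.HasAntidiagonal.sigmaAntidiagonalEquivProd _).symm
      _ = ∑' (n : ℕ) (x : Finset.HasAntidiagonal.antidiagonal n),
            ((weakCount p 0 ((x : ℕ × ℕ)).1 : ℝ≥0∞) * b ^ (p * ((x : ℕ × ℕ)).1 + 0 + 1)
              * t ^ ((p + 1) * ((x : ℕ × ℕ)).1 + 0 + 1))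
            * ((weakCount p d ((x : ℕ × ℕ)).2 : ℝ≥0∞) * b ^ (p * ((x : ℕ × ℕ)).2 + d + 1)
              * t ^ ((p + 1) * ((x : ℕ × ℕ)).2 + d + 1)) := ENNReal.tsum_sigma' _
      _ = ∑' n : ℕ, ∑ x ∈ Finset.HasAntidiagonal.antidiagonal n,
            ((weakCount p 0 x.1 : ℝ≥0∞) * b ^ (p * x.1 + 0 + 1) * t ^ ((p + 1) * x.1 + 0 + 1))
            * ((weakCount p d x.2 : ℝ≥0∞) * b ^ (p * x.2 + d + 1)
              * t ^ ((p + 1) * x.2 + d + 1)) := by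
          refine tsum_congr fun n => ?_
          rw [tsum_fintype]
          exact Finset.sum_coe_sort (Finset.HasAntidiagonal.antidiagonal n)
            (fun x => ((weakCount p 0 x.1 : ℝ≥0∞) * b ^ (p * x.1 + 0 + 1)
              * t ^ ((p + 1) * x.1 + 0 + 1))
              * ((weakCount p d x.2 : ℝ≥0∞) * b ^ (p * x.2 + d + 1)
                * t ^ ((p + 1) * x.2 + d + 1)))
  rw [key, ennA]
  apply tsum_congr
  intro n
  rw [weakCount_succ p d n]
  push_cast
  rw [Finset.sum_mul, Finset.sum_mul]
  apply Finset.sum_congr rfl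
  intro x hx
  have hxy : x.1 + x.2 = n := Finset.HasAntidiagonal.mem_antidiagonal.mp hx
  have e1 : p * x.1 + 0 + 1 + (p * x.2 + d + 1) = p * n + (d + 1) + 1 := by
    have : p * n = p * x.1 + p * x.2 := by rw [← hxy]; ring
    omega
  have e2 : (p + 1) * x.1 + 0 + 1 + ((p + 1) * x.2 + d + 1) = (p + 1) * n + (d + 1) + 1 := by
    have : (p + 1) * n = (p + 1) * x.1 + (p + 1) * x.2 := by rw [← hxy]; ring
    omega
  rw [← e1, ← e2, pow_add b, pow_add t]
  ring

open ENNReal in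
lemma ennA_pow (β : ℝ) (p d : ℕ) : ennA β p d = (ennA β p 0) ^ (d + 1) := by
  induction d with
  | zero => rw [pow_one]
  | succ d ih => rw [ennA_succ, ih, ← pow_succ']

end WalkAux

theorem crossProb_eq_pow (β : ℝ) (hβ : 0 < β) (p : ℕ) (hp : 1 ≤ p) (d : ℕ) :
    crossProb β p d = (crossProb β p 0) ^ (d + 1) := by
  rw [WalkAux.crossProb_eq_ennA β hβ.le p d, WalkAux.crossProb_eq_ennA β hβ.le p 0,
    WalkAux.ennA_pow β p d, ENNReal.toReal_pow]
end

section
/- Let β ≥ p where p is a positive integer, and d ≥ 0 an integer. Then the β-biased monotonic random walk starting at the origin crosses the line y = px + d with probability 1. -/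
section Comb

lemma upsIn_eq_sum {L : ℕ} (f : Fin L → Bool) (k : ℕ) :
    upsIn f k = ∑ i : Fin L, if (i : ℕ) < k ∧ f i = true then 1 else 0 :=
  Finset.card_filter _ _

lemma rightsIn_eq_sum {L : ℕ} (f : Fin L → Bool) (k : ℕ) :
    rightsIn f k = ∑ i : Fin L, if (i : ℕ) < k ∧ f i = false then 1 else 0 :=
  Finset.card_filter _ _

lemma upsIn_zero {L : ℕ} (f : Fin L → Bool) : upsIn f 0 = 0 := by
  simp [upsIn]

lemma upsIn_le {L : ℕ} (f : Fin L → Bool) (k : ℕ) : upsIn f k ≤ L := by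
  classical
  refine le_trans (Finset.card_filter_le _ _) ?_
  simp

lemma upsIn_cons {L : ℕ} (b : Bool) (g : Fin L → Bool) (k : ℕ) :
    upsIn (Fin.cons b g) (k + 1) = (if b = true then 1 else 0) + upsIn g k := by
  rw [upsIn_eq_sum, upsIn_eq_sum, Fin.sum_univ_succ]
  simp [Fin.cons_succ, Nat.succ_lt_succ_iff]

lemma rightsIn_cons {L : ℕ} (b : Bool) (g : Fin L → Bool) (k : ℕ) :
    rightsIn (Fin.cons b g) (k + 1) = (if b = false then 1 else 0) + rightsIn g k := by
  rw [rightsIn_eq_sum, rightsIn_eq_sum, Fin.sum_univ_succ]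
  simp [Fin.cons_succ, Nat.succ_lt_succ_iff]

lemma rightsIn_zero {L : ℕ} (f : Fin L → Bool) : rightsIn f 0 = 0 := by
  simp [rightsIn]

def WQ (p d U : ℕ) {L : ℕ} (f : Fin L → Bool) : Prop :=
  upsIn f L = U ∧ ∀ k ≤ L, upsIn f k ≤ p * rightsIn f k + d

noncomputable def wc (p d L U : ℕ) : ℕ := Nat.card {f : Fin L → Bool // WQ p d U f}

lemma weakCount_eq_wc (p d n : ℕ) :
    weakCount p d n = wc p d ((p + 1) * n + d) (p * n + d) := rfl

lemma WQ_cons_true {p d U L : ℕ} (g : Fin L → Bool) :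
    WQ p (d + 1) (U + 1) (Fin.cons true g) ↔ WQ p d U g := by
  constructor
  · rintro ⟨h1, h2⟩
    constructor
    · have := upsIn_cons true g L
      simp at this
      omega
    · intro k hk
      have := h2 (k + 1) (by omega)
      rw [upsIn_cons, rightsIn_cons] at this
      simp at this
      omega
  · rintro ⟨h1, h2⟩
    constructor
    · rw [upsIn_cons]; simp [h1]; omega
    · intro k hk
      match k with
      | 0 => simp [upsIn_zero]
      | k + 1 =>
        rw [upsIn_cons, rightsIn_cons]
        have := h2 k (by omega)
        simp
        omega

lemma WQ_cons_false {p d U L : ℕ} (g : Fin L → Bool) :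
    WQ p d U (Fin.cons false g) ↔ WQ p (d + p) U g := by
  constructor
  · rintro ⟨h1, h2⟩
    constructor
    · have := upsIn_cons false g L
      simp at this
      omega
    · intro k hk
      have := h2 (k + 1) (by omega)
      rw [upsIn_cons, rightsIn_cons] at this
      simp at this
      have : upsIn g k ≤ p * (1 + rightsIn g k) + d := this
      ring_nf at this ⊢
      omega
  · rintro ⟨h1, h2⟩
    constructor
    · rw [upsIn_cons]; simp [h1]
    · intro k hk
      match k with
      | 0 => simp [upsIn_zero]
      | k + 1 =>
        rw [upsIn_cons, rightsIn_cons]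
        have := h2 k (by omega)
        simp
        ring_nf
        omega

lemma WQ_cons_true_zero {p U L : ℕ} (g : Fin L → Bool) :
    ¬ WQ p 0 U (Fin.cons true g) := by
  rintro ⟨-, h2⟩
  have h := h2 1 (by omega)
  have e1 := upsIn_cons true g 0
  have e2 := rightsIn_cons true g 0
  norm_num at e1 e2
  rw [e1, e2] at h
  simp [upsIn_zero, rightsIn_zero] at h

lemma card_split {L : ℕ} (Q : (Fin (L + 1) → Bool) → Prop) :
    Nat.card {f : Fin (L + 1) → Bool // Q f}
      = Nat.card {g : Fin L → Bool // Q (Fin.cons true g)}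
        + Nat.card {g : Fin L → Bool // Q (Fin.cons false g)} := by
  rw [← Nat.card_sum]
  apply Nat.card_congr
  refine
    { toFun := fun f =>
        if h : f.1 0 = true then
          Sum.inl ⟨Fin.tail f.1, by
            have : Fin.cons true (Fin.tail f.1) = f.1 := by
              rw [← h]; exact Fin.cons_self_tail f.1
            rw [this]; exact f.2⟩
        else
          Sum.inr ⟨Fin.tail f.1, by
            have h' : f.1 0 = false := by simpa using h
            have : Fin.cons false (Fin.tail f.1) = f.1 := by
              rw [← h']; exact Fin.cons_self_tail f.1
            rw [this]; exact f.2⟩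
      invFun := fun s =>
        match s with
        | .inl g => ⟨Fin.cons true g.1, g.2⟩
        | .inr g => ⟨Fin.cons false g.1, g.2⟩
      left_inv := ?_
      right_inv := ?_ }
  · intro f
    by_cases h : f.1 0 = true
    · simp only [h, dif_pos]
      apply Subtype.ext
      show Fin.cons true (Fin.tail f.1) = f.1
      rw [← h]; exact Fin.cons_self_tail f.1
    · simp only [h, dif_neg, not_false_iff]
      apply Subtype.ext
      show Fin.cons false (Fin.tail f.1) = f.1
      have h' : f.1 0 = false := by simpa using h
      rw [← h']; exact Fin.cons_self_tail f.1
  · intro s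
    match s with
    | .inl g =>
      have h0 : (Fin.cons true g.1 : Fin (L+1) → Bool) 0 = true := Fin.cons_zero _ _
      dsimp only
      rw [dif_pos h0]
      exact congrArg Sum.inl (Subtype.ext (Fin.tail_cons (α := fun _ => Bool) true g.1))
    | .inr g =>
      have h0 : (Fin.cons false g.1 : Fin (L+1) → Bool) 0 = false := Fin.cons_zero _ _
      dsimp only
      rw [dif_neg (by simp [h0])]
      exact congrArg Sum.inr (Subtype.ext (Fin.tail_cons (α := fun _ => Bool) false g.1))

lemma wc_succ (p d L U : ℕ) :
    wc p (d + 1) (L + 1) (U + 1) = wc p d L U + wc p (d + 1 + p) L (U + 1) := by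
  unfold wc
  rw [card_split (Q := fun f : Fin (L+1) → Bool => WQ p (d+1) (U+1) f)]
  congr 1
  · exact Nat.card_congr (Equiv.subtypeEquivRight fun g => WQ_cons_true g)
  · exact Nat.card_congr (Equiv.subtypeEquivRight fun g => WQ_cons_false g)

lemma wc_zero_succ (p L U : ℕ) :
    wc p 0 (L + 1) (U + 1) = wc p p L (U + 1) := by
  unfold wc
  rw [card_split (Q := fun f : Fin (L+1) → Bool => WQ p 0 (U+1) f)]
  have h1 : Nat.card {g : Fin L → Bool // WQ p 0 (U+1) (Fin.cons true g)} = 0 := by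
    have : IsEmpty {g : Fin L → Bool // WQ p 0 (U+1) (Fin.cons true g)} :=
      ⟨fun g => WQ_cons_true_zero g.1 g.2⟩
    exact Nat.card_of_isEmpty
  rw [h1, zero_add]
  have := Nat.card_congr (Equiv.subtypeEquivRight fun g : Fin L → Bool => WQ_cons_false (p := p) (d := 0) (U := U+1) g)
  simpa using this

lemma wc_diag (p d : ℕ) : wc p d d d = 1 := by
  unfold wc
  have hne : Nonempty {f : Fin d → Bool // WQ p d d f} := by
    refine ⟨⟨fun _ => true, ?_, ?_⟩⟩
    · rw [upsIn_eq_sum]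
      simp [Fin.is_lt]
    · intro k hk
      have := upsIn_le (fun _ : Fin d => true) k
      omega
  have hsub : Subsingleton {f : Fin d → Bool // WQ p d d f} := by
    constructor
    rintro ⟨f, hf, -⟩ ⟨g, hg, -⟩
    have hf' : ∀ i : Fin d, f i = true := by
      intro i
      have : (Finset.univ.filter (fun i : Fin d => (i : ℕ) < d ∧ f i = true)) = Finset.univ := by
        apply Finset.eq_univ_of_card
        simpa [upsIn] using hf
      have := Finset.mem_filter.mp (this ▸ Finset.mem_univ i)
      exact this.2.2
    have hg' : ∀ i : Fin d, g i = true := by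
      intro i
      have : (Finset.univ.filter (fun i : Fin d => (i : ℕ) < d ∧ g i = true)) = Finset.univ := by
        apply Finset.eq_univ_of_card
        simpa [upsIn] using hg
      have := Finset.mem_filter.mp (this ▸ Finset.mem_univ i)
      exact this.2.2
    exact Subtype.ext (funext fun i => (hf' i).trans (hg' i).symm)
  exact Nat.card_unique

lemma weakCount_zero (p d : ℕ) : weakCount p d 0 = 1 := by
  rw [weakCount_eq_wc]
  simpa using wc_diag p d

lemma weakCount_succ_d (p d n : ℕ) :
    weakCount p (d + 1) (n + 1) = weakCount p d (n + 1) + weakCount p (d + 1 + p) n := by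
  rw [weakCount_eq_wc, weakCount_eq_wc, weakCount_eq_wc]
  have hL : (p + 1) * (n + 1) + (d + 1) = ((p + 1) * (n + 1) + d) + 1 := by ring
  have hU : p * (n + 1) + (d + 1) = (p * (n + 1) + d) + 1 := by ring
  rw [hL, hU, wc_succ]
  congr 2
  · ring
  · ring

lemma weakCount_zero_d (p n : ℕ) (hp : 0 < p) :
    weakCount p 0 (n + 1) = weakCount p p n := by
  rw [weakCount_eq_wc, weakCount_eq_wc]
  have hL : (p + 1) * (n + 1) + 0 = ((p + 1) * n + p) + 1 := by ring
  have hU : p * (n + 1) + 0 = (p * (n + 1) - 1) + 1 := by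
    have : 1 ≤ p * (n + 1) := Nat.one_le_iff_ne_zero.mpr (by positivity)
    omega
  rw [hL, hU, wc_zero_succ]
  congr 1
  have : 1 ≤ p * (n + 1) := Nat.one_le_iff_ne_zero.mpr (by positivity)
  have : p * (n + 1) - 1 + 1 = p * n + p := by
    have h : p * (n + 1) = p * n + p := by ring
    omega
  omega

end Comb

section Analysis

noncomputable def aTerm (β : ℝ) (p d n : ℕ) : ℝ :=
  (weakCount p d n : ℝ) * β ^ (p * n + d + 1) / (β + 1) ^ ((p + 1) * n + d + 1)

variable {β : ℝ} {p : ℕ}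

lemma aTerm_nonneg (hβ0 : 0 < β) (d n : ℕ) : 0 ≤ aTerm β p d n := by
  have : (0:ℝ) < β + 1 := by linarith
  unfold aTerm; positivity

lemma aux_mul_x (x y : ℝ) (hy : y ≠ 0) (W e f : ℕ) :
    (x / y) * ((W : ℝ) * x ^ e / y ^ f) = (W : ℝ) * x ^ (e+1) / y ^ (f+1) := by
  ring

lemma aux_mul_1 (x y : ℝ) (hy : y ≠ 0) (W e f : ℕ) :
    (1 / y) * ((W : ℝ) * x ^ e / y ^ f) = (W : ℝ) * x ^ e / y ^ (f+1) := by
  ring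

lemma aTerm_zero (β : ℝ) (p d : ℕ) : aTerm β p d 0 = β ^ (d+1) / (β + 1) ^ (d+1) := by
  unfold aTerm
  rw [weakCount_zero]
  norm_num

lemma aTerm_zero_zero (β : ℝ) (p : ℕ) : aTerm β p 0 0 = β / (β + 1) := by
  rw [aTerm_zero]; norm_num

lemma aTerm_zero_succ_d (β : ℝ) (hy : β + 1 ≠ 0) (p d : ℕ) :
    aTerm β p (d+1) 0 = (β / (β+1)) * aTerm β p d 0 := by
  rw [aTerm_zero, aTerm_zero]
  field_simp
  ring

lemma aTerm_rec (hy : β + 1 ≠ 0) (d n : ℕ) :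
    aTerm β p (d+1) (n+1)
      = (β / (β+1)) * aTerm β p d (n+1) + (1 / (β+1)) * aTerm β p (d+1+p) n := by
  unfold aTerm
  rw [weakCount_succ_d]
  rw [aux_mul_x β (β+1) hy, aux_mul_1 β (β+1) hy]
  have e1 : p * (n+1) + d + 1 + 1 = p * (n+1) + (d+1) + 1 := by ring
  have f1 : (p+1) * (n+1) + d + 1 + 1 = (p+1) * (n+1) + (d+1) + 1 := by ring
  have e2 : p * n + (d+1+p) + 1 = p * (n+1) + (d+1) + 1 := by ring
  have f2 : (p+1) * n + (d+1+p) + 1 + 1 = (p+1) * (n+1) + (d+1) + 1 := by ring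
  rw [e1, f1, e2, f2]
  push_cast
  ring

lemma aTerm_rec0 (hp : 0 < p) (hy : β + 1 ≠ 0) (n : ℕ) :
    aTerm β p 0 (n+1) = (1 / (β+1)) * aTerm β p p n := by
  unfold aTerm
  rw [weakCount_zero_d p n hp]
  rw [aux_mul_1 β (β+1) hy]
  have e : p * n + p + 1 = p * (n+1) + 0 + 1 := by ring
  have f : (p+1) * n + p + 1 + 1 = (p+1) * (n+1) + 0 + 1 := by ring
  rw [e, f]

noncomputable def FS (β : ℝ) (p N d : ℕ) : ℝ := ∑ n ∈ Finset.range N, aTerm β p d n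

lemma FS_zero (d : ℕ) : FS β p 0 d = 0 := by simp [FS]

lemma FS_rec0 (hp : 0 < p) (hy : β + 1 ≠ 0) (N : ℕ) :
    FS β p (N+1) 0 = β / (β+1) + (1 / (β+1)) * FS β p N p := by
  unfold FS
  rw [Finset.sum_range_succ']
  rw [aTerm_zero_zero]
  have : ∀ i ∈ Finset.range N, aTerm β p 0 (i+1) = (1/(β+1)) * aTerm β p p i :=
    fun i _ => aTerm_rec0 hp hy i
  rw [Finset.sum_congr rfl this, ← Finset.mul_sum]
  ring

lemma FS_recS (hy : β + 1 ≠ 0) (N d : ℕ) :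
    FS β p (N+1) (d+1) = (β / (β+1)) * FS β p (N+1) d + (1 / (β+1)) * FS β p N (d+1+p) := by
  unfold FS
  rw [Finset.sum_range_succ' (fun n => aTerm β p (d+1) n) N]
  have : ∀ i ∈ Finset.range N, aTerm β p (d+1) (i+1)
      = (β/(β+1)) * aTerm β p d (i+1) + (1/(β+1)) * aTerm β p (d+1+p) i :=
    fun i _ => aTerm_rec hy d i
  rw [Finset.sum_congr rfl this, aTerm_zero_succ_d β hy p d]
  rw [Finset.sum_add_distrib, ← Finset.mul_sum, ← Finset.mul_sum]
  rw [Finset.sum_range_succ' (fun n => aTerm β p d n) N]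
  ring

lemma key (hp : 0 < p) (hβ : (p:ℝ) ≤ β) :
    ∀ N, (∀ d, FS β p N d ≤ 1) ∧ (∀ d, FS β p N (d+1) ≤ FS β p N d) := by
  have hβ0 : (0:ℝ) < β := lt_of_lt_of_le (by exact_mod_cast hp) hβ
  have hy0 : (0:ℝ) < β + 1 := by linarith
  have hy : β + 1 ≠ 0 := ne_of_gt hy0
  intro N
  induction N with
  | zero => constructor <;> intro d <;> simp [FS_zero]
  | succ N ih =>
    obtain ⟨ihb, ihm⟩ := ih
    have hb : ∀ d, FS β p (N+1) d ≤ 1 := by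
      intro d
      induction d with
      | zero =>
        rw [FS_rec0 hp hy]
        have h1 : FS β p N p ≤ 1 := ihb p
        rw [← sub_nonneg]
        have : 1 - (β/(β+1) + (1/(β+1)) * FS β p N p) = (1 - FS β p N p)/(β+1) := by
          field_simp; ring
        rw [this]
        exact div_nonneg (by linarith) (le_of_lt hy0)
      | succ d ihd =>
        rw [FS_recS hy]
        have h1 : FS β p N (d+1+p) ≤ 1 := ihb _
        have : (β/(β+1)) * FS β p (N+1) d + (1/(β+1)) * FS β p N (d+1+p)
            ≤ (β/(β+1)) * 1 + (1/(β+1)) * 1 := by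
          apply add_le_add
          · exact mul_le_mul_of_nonneg_left ihd (by positivity)
          · exact mul_le_mul_of_nonneg_left h1 (by positivity)
        have heq : (β/(β+1)) * 1 + (1/(β+1)) * 1 = 1 := by field_simp
        linarith
    refine ⟨hb, ?_⟩
    intro d
    induction d with
    | zero =>
      have hC1 : FS β p N (0+1+p) ≤ 1 := ihb _
      have hCB : FS β p N (0+1+p) ≤ FS β p N p := by
        have h := ihm p
        have e : (0:ℕ)+1+p = p+1 := by omega
        rw [e]; exact h
      have hCA : FS β p N (0+1+p) ≤ FS β p (N+1) 0 := by
        rw [FS_rec0 hp hy, ← sub_nonneg]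
        have : β/(β+1) + (1/(β+1)) * FS β p N p - FS β p N (0+1+p)
            = (β * (1 - FS β p N (0+1+p)) + (FS β p N p - FS β p N (0+1+p))) / (β+1) := by
          field_simp; ring
        rw [this]
        apply div_nonneg _ (le_of_lt hy0)
        nlinarith
      rw [FS_recS hy, ← sub_nonneg]
      have : FS β p (N+1) 0 - ((β/(β+1)) * FS β p (N+1) 0 + (1/(β+1)) * FS β p N (0+1+p))
          = (FS β p (N+1) 0 - FS β p N (0+1+p)) / (β+1) := by field_simp; ring
      rw [this]
      exact div_nonneg (by linarith) (le_of_lt hy0)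
    | succ d ihd =>
      have h1 : FS β p N (d+1+1+p) ≤ FS β p N (d+1+p) := by
        have h := ihm (d+1+p)
        have e : d+1+p+1 = d+1+1+p := by omega
        rw [e] at h; exact h
      calc FS β p (N+1) (d+1+1)
          = (β / (β+1)) * FS β p (N+1) (d+1) + (1 / (β+1)) * FS β p N (d+1+1+p) :=
            FS_recS hy N (d+1)
        _ ≤ (β / (β+1)) * FS β p (N+1) d + (1 / (β+1)) * FS β p N (d+1+p) := by
            apply add_le_add
            · exact mul_le_mul_of_nonneg_left ihd (by positivity)
            · exact mul_le_mul_of_nonneg_left h1 (by positivity)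
        _ = FS β p (N+1) (d+1) := (FS_recS hy N d).symm

end Analysis

section Final

variable {β : ℝ} {p : ℕ}

lemma summable_a (hp : 0 < p) (hβ : (p:ℝ) ≤ β) (d : ℕ) :
    Summable (fun n => aTerm β p d n) := by
  have hβ0 : (0:ℝ) < β := lt_of_lt_of_le (by exact_mod_cast hp) hβ
  exact summable_of_sum_range_le (fun n => aTerm_nonneg hβ0 d n)
    (fun N => (key hp hβ N).1 d)

noncomputable def Sv (β : ℝ) (p d : ℕ) : ℝ := ∑' n, aTerm β p d n

lemma Sv_nonneg (hp : 0 < p) (hβ : (p:ℝ) ≤ β) (d : ℕ) : 0 ≤ Sv β p d := by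
  have hβ0 : (0:ℝ) < β := lt_of_lt_of_le (by exact_mod_cast hp) hβ
  exact tsum_nonneg (fun n => aTerm_nonneg hβ0 d n)

lemma Sv_le_one (hp : 0 < p) (hβ : (p:ℝ) ≤ β) (d : ℕ) : Sv β p d ≤ 1 :=
  Summable.tsum_le_of_sum_range_le (summable_a hp hβ d) (fun N => (key hp hβ N).1 d)

lemma Sv_mono (hp : 0 < p) (hβ : (p:ℝ) ≤ β) (d : ℕ) : Sv β p (d+1) ≤ Sv β p d := by
  have hA : Filter.Tendsto (fun N => FS β p N (d+1)) Filter.atTop (nhds (Sv β p (d+1))) :=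
    (summable_a hp hβ (d+1)).hasSum.tendsto_sum_nat
  have hB : Filter.Tendsto (fun N => FS β p N d) Filter.atTop (nhds (Sv β p d)) :=
    (summable_a hp hβ d).hasSum.tendsto_sum_nat
  exact le_of_tendsto_of_tendsto' hA hB (fun N => (key hp hβ N).2 d)

lemma Sv_rec0 (hp : 0 < p) (hβ : (p:ℝ) ≤ β) :
    Sv β p 0 = β/(β+1) + (1/(β+1)) * Sv β p p := by
  have hβ0 : (0:ℝ) < β := lt_of_lt_of_le (by exact_mod_cast hp) hβ
  have hy : β + 1 ≠ 0 := by intro h; linarith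
  have h := Summable.tsum_eq_zero_add (summable_a hp hβ 0)
  rw [Sv, h, aTerm_zero_zero, tsum_congr (fun n => aTerm_rec0 hp hy n), tsum_mul_left]
  rfl

lemma Sv_recS (hp : 0 < p) (hβ : (p:ℝ) ≤ β) (d : ℕ) :
    Sv β p (d+1) = (β/(β+1)) * Sv β p d + (1/(β+1)) * Sv β p (d+1+p) := by
  have hβ0 : (0:ℝ) < β := lt_of_lt_of_le (by exact_mod_cast hp) hβ
  have hy : β + 1 ≠ 0 := by intro h; linarith
  have hsum1 : Summable (fun n => (β/(β+1)) * aTerm β p d (n+1)) :=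
    Summable.mul_left _ ((summable_nat_add_iff 1).mpr (summable_a hp hβ d))
  have hsum2 : Summable (fun n => (1/(β+1)) * aTerm β p (d+1+p) n) :=
    Summable.mul_left _ (summable_a hp hβ (d+1+p))
  have step1 : Sv β p (d+1) = aTerm β p (d+1) 0 + ∑' n, aTerm β p (d+1) (n+1) :=
    Summable.tsum_eq_zero_add (summable_a hp hβ (d+1))
  have step2 : (∑' n, aTerm β p (d+1) (n+1))
      = ∑' n, ((β/(β+1)) * aTerm β p d (n+1) + (1/(β+1)) * aTerm β p (d+1+p) n) :=
    tsum_congr (fun n => aTerm_rec hy d n)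
  have step3 : (∑' n, ((β/(β+1)) * aTerm β p d (n+1) + (1/(β+1)) * aTerm β p (d+1+p) n))
      = (∑' n, (β/(β+1)) * aTerm β p d (n+1)) + ∑' n, (1/(β+1)) * aTerm β p (d+1+p) n :=
    Summable.tsum_add hsum1 hsum2
  have step4 : (∑' n, (β/(β+1)) * aTerm β p d (n+1))
      = (β/(β+1)) * ∑' n, aTerm β p d (n+1) := tsum_mul_left
  have step5 : (∑' n, (1/(β+1)) * aTerm β p (d+1+p) n)
      = (1/(β+1)) * Sv β p (d+1+p) := tsum_mul_left
  have step6 : (∑' n, aTerm β p d (n+1)) = Sv β p d - aTerm β p d 0 := by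
    have h0 := Summable.tsum_eq_zero_add (summable_a hp hβ d)
    rw [show Sv β p d = ∑' n, aTerm β p d n from rfl, h0]
    ring
  rw [step1, step2, step3, step4, step5, step6, aTerm_zero_succ_d β hy p d]
  ring

noncomputable def tv (β : ℝ) (p : ℕ) : ℕ → ℝ
  | 0 => 1 - Sv β p 0
  | (d+1) => Sv β p d - Sv β p (d+1)

lemma tv_nonneg (hp : 0 < p) (hβ : (p:ℝ) ≤ β) : ∀ d, 0 ≤ tv β p d
  | 0 => by have := Sv_le_one hp hβ 0; simp only [tv]; linarith
  | (d+1) => by have := Sv_mono hp hβ d; simp only [tv]; linarith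

lemma sum_tv (D : ℕ) : ∑ k ∈ Finset.range (D+1), tv β p k = 1 - Sv β p D := by
  induction D with
  | zero => simp [tv]
  | succ D ih => rw [Finset.sum_range_succ, ih]; simp only [tv]; ring

lemma summable_tv (hp : 0 < p) (hβ : (p:ℝ) ≤ β) : Summable (tv β p) := by
  apply summable_of_sum_range_le (c := 1) (tv_nonneg hp hβ)
  intro D
  match D with
  | 0 => simp
  | (E+1) => rw [sum_tv]; have := Sv_nonneg hp hβ E; linarith

lemma sum_tv_shift (c : ℕ) : ∀ m, ∑ i ∈ Finset.range m, tv β p (c+1+i) = Sv β p c - Sv β p (c+m)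
  | 0 => by simp
  | (m+1) => by
    rw [Finset.sum_range_succ, sum_tv_shift c m]
    have h1 : tv β p (c+1+m) = Sv β p (c+m) - Sv β p (c+m+1) := by
      have e : c+1+m = (c+m)+1 := by omega
      rw [e]
      rfl
    have e2 : c+(m+1) = c+m+1 := by omega
    rw [h1, e2]
    ring

lemma beta_tv (hp : 0 < p) (hβ : (p:ℝ) ≤ β) (d : ℕ) :
    β * tv β p d = ∑ i ∈ Finset.range p, tv β p (d+1+i) := by
  have hβ0 : (0:ℝ) < β := lt_of_lt_of_le (by exact_mod_cast hp) hβ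
  have hy : β + 1 ≠ 0 := by intro h; linarith
  rw [sum_tv_shift]
  match d with
  | 0 =>
    have h := Sv_rec0 hp hβ
    have h' : (β+1) * Sv β p 0 = β + Sv β p p := by rw [h]; field_simp; try ring
    have e : (0:ℕ)+p = p := by omega
    rw [e]
    simp only [tv]
    linarith
  | (e+1) =>
    have h := Sv_recS hp hβ e
    have h' : (β+1) * Sv β p (e+1) = β * Sv β p e + Sv β p (e+1+p) := by
      rw [h]; field_simp; try ring
    simp only [tv]
    linarith

lemma tv_zero_eq (hp : 0 < p) (hβ : (p:ℝ) ≤ β) : tv β p 0 = 0 := by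
  have ht := summable_tv hp hβ
  set T := ∑' d, tv β p d with hT
  have hT0 : 0 ≤ T := tsum_nonneg (tv_nonneg hp hβ)
  have hshift : ∀ i : ℕ, Summable (fun d => tv β p (d+1+i)) := by
    intro i
    have : Summable (fun d => tv β p (d+(i+1))) := (summable_nat_add_iff (i+1)).mpr ht
    exact this.congr (fun d => by congr 1; omega)
  have h1 : β * T = ∑ i ∈ Finset.range p, ∑' d, tv β p (d+1+i) := by
    calc β * T = ∑' d, β * tv β p d := tsum_mul_left.symm
      _ = ∑' d, ∑ i ∈ Finset.range p, tv β p (d+1+i) := tsum_congr (beta_tv hp hβ)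
      _ = ∑ i ∈ Finset.range p, ∑' d, tv β p (d+1+i) := Summable.tsum_finsetSum (fun i _ => hshift i)
  have h2 : ∀ i : ℕ, ∑' d, tv β p (d+1+i) = T - ∑ k ∈ Finset.range (i+1), tv β p k := by
    intro i
    have hs := Summable.sum_add_tsum_nat_add (i+1) ht
    have e : (∑' d, tv β p (d+1+i)) = ∑' d, tv β p (d+(i+1)) :=
      tsum_congr (fun d => by congr 1; omega)
    rw [e]; linarith [hs]
  have h3 : ∀ i : ℕ, tv β p 0 ≤ ∑ k ∈ Finset.range (i+1), tv β p k := by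
    intro i
    rw [Finset.sum_range_succ']
    have : 0 ≤ ∑ k ∈ Finset.range i, tv β p (k+1) :=
      Finset.sum_nonneg (fun k _ => tv_nonneg hp hβ _)
    linarith
  have h4 : β * T ≤ (p:ℝ) * (T - tv β p 0) := by
    rw [h1]
    calc ∑ i ∈ Finset.range p, ∑' d, tv β p (d+1+i)
        ≤ ∑ _i ∈ Finset.range p, (T - tv β p 0) := by
          apply Finset.sum_le_sum
          intro i _
          rw [h2 i]
          have := h3 i
          linarith
      _ = (p:ℝ) * (T - tv β p 0) := by
          rw [Finset.sum_const, Finset.card_range]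
          simp [nsmul_eq_mul]
  have h5 : (p:ℝ) * T ≤ β * T := mul_le_mul_of_nonneg_right hβ hT0
  have h6 : 0 ≤ tv β p 0 := tv_nonneg hp hβ 0
  have hppos : (0:ℝ) < p := by exact_mod_cast hp
  nlinarith

lemma tv_all (hp : 0 < p) (hβ : (p:ℝ) ≤ β) : ∀ d, tv β p d = 0 := by
  intro d
  induction d with
  | zero => exact tv_zero_eq hp hβ
  | succ d ih =>
    have h := beta_tv hp hβ d
    rw [ih, mul_zero] at h
    have hz := (Finset.sum_eq_zero_iff_of_nonneg (fun i _ => tv_nonneg hp hβ _)).mp h.symm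
    have h0 := hz 0 (Finset.mem_range.mpr hp)
    simpa using h0

lemma Sv_eq_one (hp : 0 < p) (hβ : (p:ℝ) ≤ β) : ∀ d, Sv β p d = 1 := by
  intro d
  induction d with
  | zero =>
    have := tv_all hp hβ 0
    simp only [tv] at this
    linarith
  | succ d ih =>
    have := tv_all hp hβ (d+1)
    simp only [tv] at this
    linarith

end Final


theorem crossProb_eq_one (β : ℝ) (p : ℕ) (hp : 0 < p) (hβ : (p : ℝ) ≤ β) (d : ℕ) :
    crossProb β p d = 1 := by
  have h : crossProb β p d = Sv β p d := rfl
  rw [h, Sv_eq_one hp hβ d]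
end
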